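/- arXiv:math/0509522 — 3 statements merged into one kernel-verified Lean document; each statement's English description precedes it below -/
import Mathlib

section
/- Let W be a random walk started at 0 with jump distribution ν supported on {-1, 0, 1, 2, ...}, and let p be such that P(W_p = -1) > 0. Define G_p as the first time in {0,...,p} at which (W_k; 0 ≤ k ≤ p) attains its minimum, and let V_0 denote the discrete Vervaat transform (cyclic shift at the first minimum). Then the law of the path V_0((W_k; 0 ≤ k ≤ p)) under P(· | W_p = -1) equals the law of (W_k; 0 ≤ k ≤ p) under P(· | ζ = p), where ζ = inf{ n : W_n = -1 }. -/
open MeasureTheory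

/-- The discrete height functional:
`H_n(w) = Card { 0 ≤ j < n : w j = min_{j ≤ k ≤ n} w k }`. -/
noncomputable def pathHeight (w : ℕ → ℤ) (n : ℕ) : ℕ :=
  {j : ℕ | j < n ∧ w j = sInf (w '' Set.Icc j n)}.ncard

/-- `L_n(w) = Card { 0 < j ≤ n : w j = max_{0 ≤ k ≤ j} w k }`. -/
noncomputable def pathL (w : ℕ → ℤ) (n : ℕ) : ℕ :=
  {j : ℕ | 0 < j ∧ j ≤ n ∧ w j = sSup (w '' Set.Icc 0 j)}.ncard

/-- The time-space reversed path `ŵ^p(k) = w(p) - w(p-k)`. -/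
def pathRev (w : ℕ → ℤ) (p : ℕ) : ℕ → ℤ := fun k => w p - w (p - k)

/-- The first passage time `t(a,w) = inf { k ∈ [0,z] : w k ≥ a }` (with
`inf ∅ = ⊤` in `ℕ∞`). -/
noncomputable def firstPassage (z : ℕ) (a : ℤ) (w : ℕ → ℤ) : ℕ∞ :=
  sInf ((fun j : ℕ => (j : ℕ∞)) '' {j : ℕ | j ≤ z ∧ a ≤ w j})

/-- `γ_p(k) = p ∧ ( t( -min_{0 ≤ i ≤ k} w i, ŵ^p ) - 1 )_+`. -/
noncomputable def gammaP (w : ℕ → ℤ) (p k : ℕ) : ℕ :=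
  (min (p : ℕ∞)
    (firstPassage p (-(sInf (w '' Set.Icc 0 k))) (pathRev w p) - 1)).toNat

/-- `M_k = L_p(ŵ^p) - L_{γ_p(k)}(ŵ^p)`. -/
noncomputable def pathM (w : ℕ → ℤ) (p k : ℕ) : ℕ :=
  pathL (pathRev w p) p - pathL (pathRev w p) (gammaP w p k)

/-- `G(w)`: the first time in `{0,…,p}` at which `w` attains its minimum over
`{0,…,p}`. -/
noncomputable def firstMin (p : ℕ) (w : ℕ → ℤ) : ℕ :=
  sInf {k : ℕ | k ≤ p ∧ ∀ j ≤ p, w k ≤ w j}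

/-- The discrete Vervaat transform of the path `(w k; 0 ≤ k ≤ p)`: cyclic shift at
the first minimum. -/
noncomputable def vervaat0 (p : ℕ) (w : ℕ → ℤ) : ℕ → ℤ := fun k =>
  if k ≤ p - firstMin p w then w (k + firstMin p w) - sInf (w '' Set.Icc 0 p)
  else w (k + firstMin p w - p) + w p - sInf (w '' Set.Icc 0 p) - w 0

set_option linter.unusedSectionVars false
set_option linter.unusedVariables false
open scoped Fin.NatCast

namespace VervaatAux

noncomputable def xe (p : ℕ) (x : Fin p → ℤ) (i : ℕ) : ℤ := if h : i < p then x ⟨i, h⟩ else 0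

noncomputable def ws (p : ℕ) (x : Fin p → ℤ) (k : ℕ) : ℤ := ∑ i ∈ Finset.range k, xe p x i

def rot (p : ℕ) [NeZero p] (g : ℕ) (x : Fin p → ℤ) : Fin p → ℤ := fun i => x (i + (g : Fin p))

variable {p : ℕ} {x y : Fin p → ℤ}

lemma ws_zero : ws p x 0 = 0 := by simp [ws]

lemma ws_succ (k : ℕ) : ws p x (k + 1) = ws p x k + xe p x k := Finset.sum_range_succ _ _

lemma xe_lt {i : ℕ} (h : i < p) : xe p x i = x ⟨i, h⟩ := dif_pos h

lemma ws_ext (h : ∀ k ≤ p, ws p x k = ws p y k) : x = y := by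
  funext i
  have h1 := h i.val (le_of_lt i.isLt)
  have h2 := h (i.val + 1) i.isLt
  rw [ws_succ, ws_succ, h1, xe_lt i.isLt, xe_lt i.isLt] at h2
  have : x ⟨i.val, i.isLt⟩ = y ⟨i.val, i.isLt⟩ := by linarith
  simpa using this

variable [NeZero p]

lemma rot_zero : rot p 0 x = x := by
  funext i; simp [rot]

lemma rot_rot (g h : ℕ) : rot p g (rot p h x) = rot p (h + g) x := by
  funext i
  simp only [rot, Nat.cast_add]
  rw [add_assoc, add_comm (g : Fin p)]

lemma rot_p : rot p p x = x := by
  funext i; simp [rot]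

lemma rot_cancel_left {g : ℕ} (hg : g ≤ p) : rot p g (rot p (p - g) x) = x := by
  rw [rot_rot, Nat.sub_add_cancel hg, rot_p]

lemma rot_cancel_right {g : ℕ} (hg : g ≤ p) : rot p (p - g) (rot p g x) = x := by
  rw [rot_rot, Nat.add_sub_cancel' hg, rot_p]

lemma ws_eq_sum : ws p x p = ∑ i : Fin p, x i := by
  rw [ws, ← Fin.sum_univ_eq_sum_range (fun i => xe p x i) p]
  exact Finset.sum_congr rfl (fun i _ => by rw [xe_lt i.isLt])

lemma ws_rot_p (g : ℕ) : ws p (rot p g x) p = ws p x p := by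
  rw [ws_eq_sum, ws_eq_sum]
  exact Equiv.sum_comp (Equiv.addRight ((g : Fin p))) x

lemma ws_rot {g : ℕ} (hg : g < p) {k : ℕ} (hk : k ≤ p) :
    ws p (rot p g x) k = if k + g ≤ p then ws p x (k + g) - ws p x g
      else ws p x (k + g - p) + ws p x p - ws p x g := by
  induction k with
  | zero => simp [ws_zero, Nat.le_of_lt hg]
  | succ k ih =>
    have hk' : k ≤ p := Nat.le_of_succ_le hk
    have hkp : k < p := hk
    rw [ws_succ, ih hk', xe_lt hkp]
    have hval : (rot p g x) ⟨k, hkp⟩ = xe p x ((k + g) % p) := by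
      have : ((⟨k, hkp⟩ : Fin p) + (g : Fin p)).val = (k + g) % p := by
        rw [Fin.add_def]
        simp [Fin.val_natCast, Nat.mod_add_mod]
      rw [rot]
      rw [xe_lt (Nat.mod_lt _ (Nat.pos_of_ne_zero (NeZero.ne p)))]
      congr 1
      exact Fin.ext this
    rw [hval]
    rcases le_or_gt (k + 1 + g) p with h1 | h1
    · have h2 : k + g ≤ p := by omega
      have h3 : k + g < p := by omega
      rw [if_pos h2, if_pos h1, Nat.mod_eq_of_lt h3, xe_lt h3]
      have : ws p x (k + 1 + g) = ws p x (k + g) + x ⟨k + g, h3⟩ := by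
        have := ws_succ (x := x) (k + g)
        rw [xe_lt h3] at this
        rw [show k + 1 + g = k + g + 1 by omega, this]
      rw [this]; ring
    · rcases le_or_gt (k + g) p with h2 | h2
      · -- k + g = p
        have h3 : k + g = p := by omega
        rw [if_pos h2, if_neg (not_le.mpr h1), h3]
        have h4 : (k + 1 + g - p) = 1 := by omega
        rw [h4, Nat.mod_self]
        have hws1 : ws p x 1 = xe p x 0 := by
          rw [show (1:ℕ) = 0 + 1 from rfl, ws_succ, ws_zero, zero_add]
        rw [hws1]; ring
      · rw [if_neg (not_le.mpr h2), if_neg (not_le.mpr (by omega : p < k + 1 + g))]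
        have h3 : k + g - p < p := by omega
        have h4 : (k + g) % p = k + g - p := by
          rw [Nat.mod_eq_sub_mod (by omega), Nat.mod_eq_of_lt h3]
        rw [h4, xe_lt h3]
        have : ws p x (k + 1 + g - p) = ws p x (k + g - p) + x ⟨k + g - p, h3⟩ := by
          have := ws_succ (x := x) (k + g - p)
          rw [xe_lt h3] at this
          rw [show k + 1 + g - p = k + g - p + 1 by omega, this]
        rw [this]; ring


/-! ### firstMin facts -/

section FirstMin
variable (q : ℕ) (w : ℕ → ℤ)

lemma firstMin_spec : firstMin q w ≤ q ∧ ∀ j ≤ q, w (firstMin q w) ≤ w j := by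
  have hne : {k : ℕ | k ≤ q ∧ ∀ j ≤ q, w k ≤ w j}.Nonempty := by
    obtain ⟨k, hk, hmin⟩ := Finset.exists_min_image (Finset.Icc 0 q) w ⟨0, by simp⟩
    exact ⟨k, by simpa using hk, fun j hj => hmin j (by simpa using hj)⟩
  exact Nat.sInf_mem hne

lemma firstMin_strict {k : ℕ} (hk : k < firstMin q w) : w (firstMin q w) < w k := by
  have hns := Nat.notMem_of_lt_sInf hk
  have hle : k ≤ q := le_trans (le_of_lt hk) (firstMin_spec q w).1
  simp only [Set.mem_setOf_eq, not_and, not_forall] at hns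
  obtain ⟨j, hj, hjk⟩ := hns hle
  exact lt_of_le_of_lt ((firstMin_spec q w).2 j hj) (lt_of_not_ge hjk)

lemma sInf_image_eq : sInf (w '' Set.Icc 0 q) = w (firstMin q w) := by
  apply le_antisymm
  · exact csInf_le ((Set.finite_Icc 0 q).image w).bddBelow
      ⟨firstMin q w, by simp [(firstMin_spec q w).1], rfl⟩
  · refine le_csInf ⟨w 0, 0, by simp, rfl⟩ ?_
    rintro b ⟨j, hj, rfl⟩
    exact (firstMin_spec q w).2 j (Set.mem_Icc.mp hj).2

lemma firstMin_eq_of (g : ℕ) (hg : g ≤ q) (hmem : ∀ j ≤ q, w g ≤ w j)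
    (hlt : ∀ k < g, w g < w k) : firstMin q w = g := by
  have hgS : g ∈ {k : ℕ | k ≤ q ∧ ∀ j ≤ q, w k ≤ w j} := ⟨hg, hmem⟩
  have h1 : firstMin q w ≤ g := Nat.sInf_le hgS
  rcases lt_or_eq_of_le h1 with h | h
  · exfalso
    have := (firstMin_spec q w).2 g hg
    exact absurd this (not_le.mpr (hlt _ h))
  · exact h

end FirstMin

end VervaatAux
section C3
namespace VervaatAux
variable {p : ℕ} [NeZero p] {x : Fin p → ℤ}

lemma prefix_nonneg_rot (hsum : ws p x p = -1) :
    ∀ n < p, 0 ≤ ws p (rot p (firstMin p (ws p x) % p) x) n := by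
  intro n hn
  set G := firstMin p (ws p x) with hG
  have hGle : G ≤ p := (firstMin_spec p (ws p x)).1
  have hmin : ∀ j ≤ p, ws p x G ≤ ws p x j := (firstMin_spec p (ws p x)).2
  rcases eq_or_lt_of_le hGle with hGp | hGp
  · have h0 : G % p = 0 := by rw [hGp, Nat.mod_self]
    rw [h0, rot_zero]
    have hst := firstMin_strict p (ws p x) (k := n) (by omega)
    rw [← hG, hGp, hsum] at hst
    linarith
  · rw [Nat.mod_eq_of_lt hGp, ws_rot hGp (le_of_lt hn)]
    split_ifs with h
    · have := hmin (n + G) h; linarith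
    · have hlt : n + G - p < G := by omega
      have hst := firstMin_strict p (ws p x) hlt
      rw [← hG] at hst
      rw [hsum]
      linarith

lemma firstMin_mod_eq_of_prefix (hsum : ws p x p = -1) {g : ℕ} (hg : g < p)
    (hpref : ∀ n < p, 0 ≤ ws p (rot p g x) n) : firstMin p (ws p x) % p = g := by
  have hp0 : 0 < p := Nat.pos_of_ne_zero (NeZero.ne p)
  rcases Nat.eq_zero_or_pos g with hg0 | hg0
  · subst hg0
    have hw : ∀ n < p, 0 ≤ ws p x n := by
      intro n hn; simpa [rot_zero] using hpref n hn
    have hfm : firstMin p (ws p x) = p := by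
      apply firstMin_eq_of p (ws p x) p le_rfl
      · intro j hj
        rcases eq_or_lt_of_le hj with h | h
        · rw [h]
        · rw [hsum]; linarith [hw j h]
      · intro k hk
        rw [hsum]; linarith [hw k hk]
    rw [hfm, Nat.mod_self]
  · have hgneg : ws p x g ≤ -1 := by
      have := hpref (p - g) (by omega)
      rw [ws_rot hg (by omega), if_pos (by omega),
        show p - g + g = p by omega, hsum] at this
      linarith
    have key : ∀ j ≤ p, ws p x g ≤ ws p x j ∧ (j < g → ws p x g < ws p x j) := by
      intro j hj
      rcases le_or_gt g j with hgj | hgj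
      · refine ⟨?_, fun h => absurd hgj (not_le.mpr h)⟩
        have hn : j - g < p := by omega
        have := hpref (j - g) hn
        rw [ws_rot hg (by omega), if_pos (by omega),
          show j - g + g = j by omega] at this
        linarith
      · rcases Nat.eq_zero_or_pos j with hj0 | hj0
        · subst hj0
          rw [ws_zero]
          exact ⟨by linarith, fun _ => by linarith⟩
        · have hn : j + p - g < p := by omega
          have := hpref (j + p - g) hn
          rw [ws_rot hg (by omega), if_neg (by omega),
            show j + p - g + g - p = j by omega, hsum] at this
          exact ⟨by linarith, fun _ => by linarith⟩
    have hfm : firstMin p (ws p x) = g :=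
      firstMin_eq_of p (ws p x) g (le_of_lt hg) (fun j hj => (key j hj).1)
        (fun k hk => (key k (by omega)).2 hk)
    rw [hfm, Nat.mod_eq_of_lt hg]

lemma vervaat_eq_rot (hsum : ws p x p = -1) {k : ℕ} (hk : k ≤ p) :
    vervaat0 p (ws p x) k = ws p (rot p (firstMin p (ws p x) % p) x) k := by
  set G := firstMin p (ws p x) with hG
  have hGle : G ≤ p := (firstMin_spec p (ws p x)).1
  have hsInf : sInf ((ws p x) '' Set.Icc 0 p) = ws p x G := by
    rw [sInf_image_eq, ← hG]
  rcases eq_or_lt_of_le hGle with hGp | hGp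
  · have h0 : G % p = 0 := by rw [hGp, Nat.mod_self]
    rw [h0, rot_zero]
    show (if k ≤ p - firstMin p (ws p x) then _ else _) = _
    rw [← hG, hsInf, hGp]
    rcases Nat.eq_zero_or_pos k with hk0 | hk0
    · subst hk0
      rw [if_pos (by omega), ws_zero, zero_add, sub_self]
    · rw [if_neg (by omega), show k + p - p = k by omega, ws_zero, hsum]
      ring
  · rw [Nat.mod_eq_of_lt hGp, ws_rot hGp hk]
    show (if k ≤ p - firstMin p (ws p x) then _ else _) = _
    rw [← hG, hsInf]
    by_cases h : k + G ≤ p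
    · rw [if_pos (by omega), if_pos h]
    · rw [if_neg (by omega), if_neg h, ws_zero]
      ring

lemma prefix_nonneg_of_ne (hx : ∀ i, -1 ≤ x i) (hne : ∀ n < p, ws p x n ≠ -1) :
    ∀ n < p, 0 ≤ ws p x n := by
  intro n hn
  induction n with
  | zero => simp [ws_zero]
  | succ m ih =>
    have h1 : 0 ≤ ws p x m := ih (by omega)
    have h2 : -1 ≤ xe p x m := by
      rw [xe_lt (by omega : m < p)]; exact hx _
    have h3 := ws_succ (x := x) m
    have h4 := hne (m + 1) hn
    omega

end VervaatAux
end C3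
section C4
namespace VervaatAux
open MeasureTheory
variable {p : ℕ} [NeZero p] (ν : Measure ℤ) [IsProbabilityMeasure ν]

lemma measSet (s : Set (Fin p → ℤ)) : MeasurableSet s := s.to_countable.measurableSet

noncomputable def μp (p : ℕ) (ν : Measure ℤ) : Measure (Fin p → ℤ) :=
  Measure.pi fun _ => ν

lemma mu_singleton (a : Fin p → ℤ) : μp p ν {a} = ∏ i : Fin p, ν {a i} := by
  rw [← Set.univ_pi_singleton a, μp, Measure.pi_pi]

lemma mu_rot (g : ℕ) (a : Fin p → ℤ) : μp p ν {rot p g a} = μp p ν {a} := by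
  rw [mu_singleton, mu_singleton]
  simp only [rot]
  exact Equiv.prod_comp (Equiv.addRight ((g : Fin p))) (fun j => ν {a j})

lemma mu_eq_tsum (s : Set (Fin p → ℤ)) :
    μp p ν s = ∑' (x : s), μp p ν {(x : Fin p → ℤ)} := by
  conv_lhs => rw [show s = ⋃ x ∈ s, {x} by simp]
  exact measure_biUnion s.to_countable
    (fun a _ b _ hab => by simpa [Function.onFun, Set.disjoint_singleton_left] using hab)
    (fun _ _ => measSet _)

lemma mu_bad (hν : ν {k : ℤ | k < -1} = 0) :
    μp p ν {x : Fin p → ℤ | ¬ ∀ i, -1 ≤ x i} = 0 := by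
  have hset : {x : Fin p → ℤ | ¬ ∀ i, -1 ≤ x i}
      = ⋃ i, Function.eval i ⁻¹' {k : ℤ | k < -1} := by
    ext x
    simp [Function.eval, not_forall, not_le]
  rw [hset]
  apply measure_iUnion_null
  intro i
  rw [Set.eval_preimage, μp, Measure.pi_pi]
  apply Finset.prod_eq_zero (Finset.mem_univ i)
  rw [Function.update_self]
  exact hν

lemma mu_inter_good (hν : ν {k : ℤ | k < -1} = 0) (s : Set (Fin p → ℤ)) :
    μp p ν (s ∩ {x | ∀ i, -1 ≤ x i}) = μp p ν s := by
  apply le_antisymm (measure_mono Set.inter_subset_left)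
  have hsub : s ⊆ (s ∩ {x | ∀ i, -1 ≤ x i}) ∪ {x | ¬ ∀ i, -1 ≤ x i} := by
    intro x hx
    by_cases h : ∀ i, -1 ≤ x i
    · exact Or.inl ⟨hx, h⟩
    · exact Or.inr h
  refine le_trans (measure_mono hsub) (le_trans (measure_union_le _ _) ?_)
  rw [mu_bad ν hν, add_zero]

lemma rot_mem_good {g : ℕ} {x : Fin p → ℤ} (hx : ∀ i, -1 ≤ x i) :
    ∀ i, -1 ≤ rot p g x i := fun i => hx _

lemma kemperman (hν : ν {k : ℤ | k < -1} = 0) :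
    μp p ν {x : Fin p → ℤ | ws p x p = -1}
      = p * μp p ν {x : Fin p → ℤ | ws p x p = -1 ∧ ∀ n < p, ws p x n ≠ -1} := by
  have hp0 : 0 < p := Nat.pos_of_ne_zero (NeZero.ne p)
  set Gd : Set (Fin p → ℤ) := {x | ∀ i, -1 ≤ x i} with hGd
  set D : Set (Fin p → ℤ) := {x | ws p x p = -1} with hD
  set B : Set (Fin p → ℤ) := {x | ws p x p = -1 ∧ ∀ n < p, ws p x n ≠ -1} with hB
  -- membership lemmas
  have hto : ∀ (y : Fin p → ℤ), y ∈ B ∩ Gd → ∀ g : Fin p,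
      rot p (p - (g : ℕ)) y ∈ D ∩ Gd := by
    rintro y ⟨⟨hy1, _⟩, hy3⟩ g
    exact ⟨by rw [hD, Set.mem_setOf_eq, ws_rot_p, hy1], rot_mem_good hy3⟩
  have hinv : ∀ (x : Fin p → ℤ), x ∈ D ∩ Gd →
      rot p (firstMin p (ws p x) % p) x ∈ B ∩ Gd := by
    rintro x ⟨hx1, hx2⟩
    have hpref := prefix_nonneg_rot (x := x) hx1
    refine ⟨⟨by rw [ws_rot_p]; exact hx1, fun n hn => ?_⟩, rot_mem_good hx2⟩
    have := hpref n hn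
    intro hcon
    rw [hcon] at this
    norm_num at this
  have hgstar : ∀ (y : Fin p → ℤ), y ∈ B ∩ Gd → ∀ g : Fin p,
      firstMin p (ws p (rot p (p - (g : ℕ)) y)) % p = (g : ℕ) := by
    rintro y ⟨⟨hy1, hy2⟩, hy3⟩ g
    apply firstMin_mod_eq_of_prefix
    · rw [ws_rot_p]; exact hy1
    · exact g.isLt
    · intro n hn
      rw [rot_cancel_left (le_of_lt g.isLt)]
      exact prefix_nonneg_of_ne hy3 hy2 n hn
  -- the equivalence
  let e : (↥(B ∩ Gd)) × Fin p ≃ ↥(D ∩ Gd) :=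
    { toFun := fun yg => ⟨rot p (p - (yg.2 : ℕ)) yg.1, hto yg.1 yg.1.2 yg.2⟩
      invFun := fun x => (⟨rot p (firstMin p (ws p (x : Fin p → ℤ)) % p) x,
          hinv x x.2⟩,
        ⟨firstMin p (ws p (x : Fin p → ℤ)) % p, Nat.mod_lt _ hp0⟩)
      left_inv := by
        rintro ⟨y, g⟩
        have h1 := hgstar y y.2 g
        ext
        · show (rot p (firstMin p (ws p (rot p (p - (g:ℕ)) y)) % p)
            (rot p (p - (g:ℕ)) (y : Fin p → ℤ))) _ = _
          rw [h1, rot_cancel_left (le_of_lt g.isLt)]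
        · show firstMin p (ws p (rot p (p - (g:ℕ)) y)) % p = (g : ℕ)
          exact h1
      right_inv := by
        rintro ⟨x, hx⟩
        apply Subtype.ext
        show rot p (p - firstMin p (ws p x) % p) (rot p (firstMin p (ws p x) % p) x) = x
        exact rot_cancel_right (le_of_lt (Nat.mod_lt _ hp0)) }
  have hcalc : μp p ν (D ∩ Gd) = p * μp p ν (B ∩ Gd) := by
    rw [mu_eq_tsum, ← Equiv.tsum_eq e (fun z : ↥(D ∩ Gd) => μp p ν {(z : Fin p → ℤ)})]
    have hterm : ∀ yg : (↥(B ∩ Gd)) × Fin p,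
        μp p ν {((e yg : ↥(D ∩ Gd)) : Fin p → ℤ)} = μp p ν {(yg.1 : Fin p → ℤ)} := by
      intro yg
      exact mu_rot ν _ _
    rw [tsum_congr hterm]
    rw [show ∑' (b : (↥(B ∩ Gd)) × Fin p), μp p ν {(b.1 : Fin p → ℤ)}
        = ∑' (y : ↥(B ∩ Gd)) (_ : Fin p), μp p ν {(y : Fin p → ℤ)} from
      ENNReal.tsum_prod (f := fun (y : ↥(B ∩ Gd)) (_ : Fin p) => μp p ν {(y : Fin p → ℤ)})]
    have hconst : ∀ y : ↥(B ∩ Gd),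
        ∑' (_ : Fin p), μp p ν {(y : Fin p → ℤ)} = p * μp p ν {(y : Fin p → ℤ)} := by
      intro y
      rw [tsum_fintype]
      simp [Finset.sum_const, Finset.card_univ, nsmul_eq_mul]
    rw [tsum_congr hconst, ENNReal.tsum_mul_left, ← mu_eq_tsum]
  rw [← mu_inter_good ν hν D, ← mu_inter_good ν hν B, hcalc]

end VervaatAux
end C4
section C5
namespace VervaatAux
open MeasureTheory
variable {p : ℕ} [NeZero p] {f : ℕ → ℤ}

def dy (p : ℕ) (f : ℕ → ℤ) : Fin p → ℤ := fun i => f ((i : ℕ) + 1) - f (i : ℕ)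

lemma ws_dy (hf0 : f 0 = 0) : ∀ k ≤ p, ws p (dy p f) k = f k := by
  intro k hk
  induction k with
  | zero => rw [ws_zero, hf0]
  | succ m ih =>
    rw [ws_succ, ih (by omega), xe_lt (by omega : m < p)]
    show f m + (f (m + 1) - f m) = f (m + 1)
    ring

lemma gstar_rot (hf0 : f 0 = 0) (hfp : f p = -1) (hfn : ∀ n < p, 0 ≤ f n) (g : Fin p) :
    firstMin p (ws p (rot p (p - (g : ℕ)) (dy p f))) % p = (g : ℕ) := by
  have hwy := ws_dy (p := p) hf0
  have hsum : ws p (rot p (p - (g : ℕ)) (dy p f)) p = -1 := by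
    rw [ws_rot_p, hwy p le_rfl, hfp]
  apply firstMin_mod_eq_of_prefix hsum g.isLt
  intro n hn
  rw [rot_cancel_left (le_of_lt g.isLt), hwy n (le_of_lt hn)]
  exact hfn n hn

lemma setA_eq (hf0 : f 0 = 0) (hfp : f p = -1) (hfn : ∀ n < p, 0 ≤ f n) :
    {x : Fin p → ℤ | ws p x p = -1 ∧ ∀ k ≤ p, vervaat0 p (ws p x) k = f k}
      = ⋃ g : Fin p, {rot p (p - (g : ℕ)) (dy p f)} := by
  have hwy := ws_dy (p := p) hf0
  ext x
  simp only [Set.mem_setOf_eq, Set.mem_iUnion, Set.mem_singleton_iff]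
  constructor
  · rintro ⟨hsum, hverv⟩
    have hg : firstMin p (ws p x) % p < p :=
      Nat.mod_lt _ (Nat.pos_of_ne_zero (NeZero.ne p))
    refine ⟨⟨_, hg⟩, ?_⟩
    have hry : rot p (firstMin p (ws p x) % p) x = dy p f := by
      apply ws_ext
      intro k hk
      rw [← vervaat_eq_rot hsum hk, hverv k hk, hwy k hk]
    calc x = rot p (p - firstMin p (ws p x) % p)
            (rot p (firstMin p (ws p x) % p) x) :=
          (rot_cancel_right (le_of_lt hg)).symm
      _ = _ := by rw [hry]
  · rintro ⟨g, rfl⟩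
    have hsum : ws p (rot p (p - (g : ℕ)) (dy p f)) p = -1 := by
      rw [ws_rot_p, hwy p le_rfl, hfp]
    have hrot : rot p (g : ℕ) (rot p (p - (g : ℕ)) (dy p f)) = dy p f :=
      rot_cancel_left (le_of_lt g.isLt)
    refine ⟨hsum, fun k hk => ?_⟩
    rw [vervaat_eq_rot hsum hk, gstar_rot hf0 hfp hfn g, hrot, hwy k hk]

lemma mu_setA (ν : Measure ℤ) [IsProbabilityMeasure ν]
    (hf0 : f 0 = 0) (hfp : f p = -1) (hfn : ∀ n < p, 0 ≤ f n) :
    μp p ν {x : Fin p → ℤ | ws p x p = -1 ∧ ∀ k ≤ p, vervaat0 p (ws p x) k = f k}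
      = p * μp p ν {dy p f} := by
  rw [setA_eq hf0 hfp hfn]
  rw [measure_iUnion ?_ (fun _ => measSet _)]
  · rw [tsum_congr (fun g => mu_rot ν _ (dy p f)), tsum_fintype]
    simp [Finset.card_univ, nsmul_eq_mul]
  · intro g g' hne
    simp only [Set.disjoint_singleton]
    intro hcon
    apply hne
    apply Fin.ext
    rw [← gstar_rot hf0 hfp hfn g, ← gstar_rot hf0 hfp hfn g', hcon]

lemma setC_eq (hf0 : f 0 = 0) (hfp : f p = -1) (hfn : ∀ n < p, 0 ≤ f n) :
    {x : Fin p → ℤ | (ws p x p = -1 ∧ ∀ n < p, ws p x n ≠ -1) ∧ ∀ k ≤ p, ws p x k = f k}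
      = {dy p f} := by
  ext x
  simp only [Set.mem_setOf_eq, Set.mem_singleton_iff]
  constructor
  · rintro ⟨-, hwf⟩
    apply ws_ext
    intro k hk
    rw [hwf k hk, ws_dy hf0 k hk]
  · rintro rfl
    refine ⟨⟨?_, ?_⟩, fun k hk => ws_dy hf0 k hk⟩
    · rw [ws_dy hf0 p le_rfl, hfp]
    · intro n hn
      rw [ws_dy hf0 n (le_of_lt hn)]
      have := hfn n hn
      omega
lemma setA_empty (hng : ¬ (f 0 = 0 ∧ f p = -1 ∧ ∀ n < p, 0 ≤ f n)) :
    {x : Fin p → ℤ | ws p x p = -1 ∧ ∀ k ≤ p, vervaat0 p (ws p x) k = f k} = ∅ := by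
  ext x
  simp only [Set.mem_setOf_eq, Set.mem_empty_iff_false, iff_false]
  rintro ⟨hsum, hverv⟩
  apply hng
  have key : ∀ k ≤ p, f k = ws p (rot p (firstMin p (ws p x) % p) x) k := fun k hk => by
    rw [← hverv k hk, vervaat_eq_rot hsum hk]
  refine ⟨?_, ?_, ?_⟩
  · rw [key 0 (Nat.zero_le p), ws_zero]
  · rw [key p le_rfl, ws_rot_p, hsum]
  · intro n hn
    rw [key n (le_of_lt hn)]
    exact prefix_nonneg_rot hsum n hn

lemma setC_null (ν : Measure ℤ) [IsProbabilityMeasure ν] (hν : ν {k : ℤ | k < -1} = 0)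
    (hng : ¬ (f 0 = 0 ∧ f p = -1 ∧ ∀ n < p, 0 ≤ f n)) :
    μp p ν {x : Fin p → ℤ |
      (ws p x p = -1 ∧ ∀ n < p, ws p x n ≠ -1) ∧ ∀ k ≤ p, ws p x k = f k} = 0 := by
  apply measure_mono_null ?_ (mu_bad ν hν)
  rintro x ⟨⟨hsum, hne⟩, hwf⟩
  simp only [Set.mem_setOf_eq]
  intro hgood
  apply hng
  refine ⟨by rw [← hwf 0 (Nat.zero_le p), ws_zero], by rw [← hwf p le_rfl, hsum], ?_⟩
  intro n hn
  rw [← hwf n (le_of_lt hn)]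
  exact prefix_nonneg_of_ne hgood hne n hn

end VervaatAux
end C5
section C6
namespace VervaatAux
open MeasureTheory

lemma master (ν : Measure ℤ) [IsProbabilityMeasure ν] (hν : ν {k : ℤ | k < -1} = 0)
    (p : ℕ) [NeZero p] (f : ℕ → ℤ) :
    μp p ν {x : Fin p → ℤ | ws p x p = -1 ∧ ∀ k ≤ p, vervaat0 p (ws p x) k = f k}
      * μp p ν {x : Fin p → ℤ | ws p x p = -1 ∧ ∀ n < p, ws p x n ≠ -1}
    = μp p ν {x : Fin p → ℤ |
        (ws p x p = -1 ∧ ∀ n < p, ws p x n ≠ -1) ∧ ∀ k ≤ p, ws p x k = f k}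
      * μp p ν {x : Fin p → ℤ | ws p x p = -1} := by
  by_cases hg : f 0 = 0 ∧ f p = -1 ∧ ∀ n < p, 0 ≤ f n
  · obtain ⟨hf0, hfp, hfn⟩ := hg
    rw [mu_setA ν hf0 hfp hfn, setC_eq hf0 hfp hfn, kemperman ν hν]
    ring
  · rw [setA_empty hg, setC_null ν hν hg, measure_empty, zero_mul, zero_mul]

lemma firstMin_congr (q : ℕ) {w w' : ℕ → ℤ} (h : ∀ j ≤ q, w j = w' j) :
    firstMin q w = firstMin q w' := by
  unfold firstMin
  congr 1
  ext k
  simp only [Set.mem_setOf_eq]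
  constructor
  · rintro ⟨hk, hall⟩
    exact ⟨hk, fun j hj => by rw [← h k hk, ← h j hj]; exact hall j hj⟩
  · rintro ⟨hk, hall⟩
    exact ⟨hk, fun j hj => by rw [h k hk, h j hj]; exact hall j hj⟩

lemma image_Icc_congr (q : ℕ) {w w' : ℕ → ℤ} (h : ∀ j ≤ q, w j = w' j) :
    w '' Set.Icc 0 q = w' '' Set.Icc 0 q :=
  Set.image_congr fun j hj => h j (Set.mem_Icc.mp hj).2

lemma vervaat_congr (q : ℕ) {w w' : ℕ → ℤ} (h : ∀ j ≤ q, w j = w' j)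
    {k : ℕ} (hk : k ≤ q) : vervaat0 q w k = vervaat0 q w' k := by
  have hfm := firstMin_congr q h
  have hG : firstMin q w' ≤ q := (firstMin_spec q w').1
  unfold vervaat0
  rw [hfm, image_Icc_congr q h]
  split_ifs with hsplit
  · rw [h (k + firstMin q w') (by omega)]
  · rw [h (k + firstMin q w' - q) (by omega), h q le_rfl, h 0 (Nat.zero_le q)]

end VervaatAux
end C6


open VervaatAux

/-- Vervaat's theorem for left-continuous random walks: the law of
`V_0((W_k; 0 ≤ k ≤ p))` under `P(· | W_p = -1)` equals the law of `(W_k; 0 ≤ k ≤ p)`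
under `P(· | ζ = p)` (stated in cross-multiplied form for every cylinder event). -/
theorem discrete_vervaat {Ω : Type*} [MeasurableSpace Ω] (P : Measure Ω)
    [IsProbabilityMeasure P]
    (ν : Measure ℤ) [IsProbabilityMeasure ν] (hν : ν {k : ℤ | k < -1} = 0)
    (ξ : ℕ → Ω → ℤ) (hmeas : ∀ i, Measurable (ξ i))
    (hindep : ProbabilityTheory.iIndepFun ξ P)
    (hdist : ∀ i, Measure.map (ξ i) P = ν)
    (W : ℕ → Ω → ℤ) (hW : ∀ n ω, W n ω = ∑ i ∈ Finset.range n, ξ i ω)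
    (ζ : Ω → ℕ) (hζ : ∀ ω, ζ ω = sInf {n : ℕ | W n ω = -1})
    (p : ℕ) (hp : 1 ≤ p) (hpos : P {ω | W p ω = -1} ≠ 0) (f : ℕ → ℤ) :
    P {ω | W p ω = -1 ∧ ∀ k ≤ p, vervaat0 p (fun m => W m ω) k = f k} *
      P {ω | ζ ω = p}
    = P {ω | ζ ω = p ∧ ∀ k ≤ p, W k ω = f k} * P {ω | W p ω = -1} := by
  classical
  haveI : NeZero p := ⟨by omega⟩
  set T : Ω → (Fin p → ℤ) := fun ω i => ξ i ω with hTdef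
  have hTmeas : Measurable T := measurable_pi_lambda _ fun i => hmeas i
  -- the law of the increments is the product measure
  have hmap : Measure.map T P = μp p ν := by
    rw [μp]
    refine (Measure.pi_eq fun s _ => ?_).symm
    rw [Measure.map_apply hTmeas (measSet _)]
    set S' : ℕ → Set ℤ := fun i => if h : i < p then s ⟨i, h⟩ else Set.univ with hS'
    have hpre : T ⁻¹' (Set.univ.pi s) = ⋂ i ∈ Finset.range p, ξ i ⁻¹' S' i := by
      ext ω
      simp only [Set.mem_preimage, Set.mem_pi, Set.mem_univ, forall_true_left,
        Set.mem_iInter, Finset.mem_range]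
      constructor
      · intro h i hi
        have : S' i = s ⟨i, hi⟩ := by rw [hS']; exact dif_pos hi
        rw [this]
        exact h ⟨i, hi⟩
      · intro h i
        have h2 := h i.val i.isLt
        have : S' i.val = s i := by
          rw [hS']
          simp only [dif_pos i.isLt]
        rwa [this] at h2
    rw [hpre, hindep.measure_inter_preimage_eq_mul (Finset.range p)
      (fun i _ => MeasurableSpace.measurableSet_top)]
    have hterm : ∀ i ∈ Finset.range p, P (ξ i ⁻¹' S' i) = ν (S' i) := by
      intro i _
      rw [← hdist i, Measure.map_apply (hmeas i) MeasurableSpace.measurableSet_top]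
    rw [Finset.prod_congr rfl hterm, ← Fin.prod_univ_eq_prod_range (fun i => ν (S' i)) p]
    apply Finset.prod_congr rfl
    intro i _
    have h5 : S' i.val = s i := by
      rw [hS']
      simp only [dif_pos i.isLt]
    rw [h5]
  -- pointwise identification of the walk with partial sums of T
  have hWT : ∀ ω, ∀ k ≤ p, W k ω = ws p (T ω) k := by
    intro ω k hk
    rw [hW, ws]
    apply Finset.sum_congr rfl
    intro i hi
    rw [Finset.mem_range] at hi
    rw [xe_lt (lt_of_lt_of_le hi hk)]
  have hzeta : ∀ ω, ζ ω = p ↔ (W p ω = -1 ∧ ∀ n < p, W n ω ≠ -1) := by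
    intro ω
    rw [hζ]
    constructor
    · intro h
      have hne : {n : ℕ | W n ω = -1}.Nonempty := by
        by_contra hcon
        rw [Set.not_nonempty_iff_eq_empty] at hcon
        rw [hcon, Nat.sInf_empty] at h
        omega
      have hmem := Nat.sInf_mem hne
      rw [h] at hmem
      refine ⟨hmem, fun n hn hcon => ?_⟩
      exact Nat.notMem_of_lt_sInf (h ▸ hn) hcon
    · rintro ⟨h1, h2⟩
      apply le_antisymm
      · exact Nat.sInf_le h1
      · by_contra hcon
        push_neg at hcon
        have hm : W (sInf {n : ℕ | W n ω = -1}) ω = -1 :=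
          Nat.sInf_mem (⟨p, h1⟩ : {n : ℕ | W n ω = -1}.Nonempty)
        exact h2 _ hcon hm
  -- identify the four events with preimages under T
  have hPA : P {ω | W p ω = -1 ∧ ∀ k ≤ p, vervaat0 p (fun m => W m ω) k = f k}
      = μp p ν {x : Fin p → ℤ | ws p x p = -1 ∧ ∀ k ≤ p, vervaat0 p (ws p x) k = f k} := by
    rw [← hmap, Measure.map_apply hTmeas (measSet _)]
    congr 1
    ext ω
    simp only [Set.mem_setOf_eq, Set.mem_preimage]
    rw [hWT ω p le_rfl]
    refine and_congr Iff.rfl (forall_congr' fun k => imp_congr_right fun hk => ?_)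
    rw [vervaat_congr p (fun j hj => hWT ω j hj) hk]
  have hPB : P {ω | ζ ω = p}
      = μp p ν {x : Fin p → ℤ | ws p x p = -1 ∧ ∀ n < p, ws p x n ≠ -1} := by
    rw [← hmap, Measure.map_apply hTmeas (measSet _)]
    congr 1
    ext ω
    simp only [Set.mem_setOf_eq, Set.mem_preimage]
    rw [hzeta ω, hWT ω p le_rfl]
    refine and_congr Iff.rfl (forall_congr' fun n => imp_congr_right fun hn => ?_)
    rw [hWT ω n (le_of_lt hn)]
  have hPC : P {ω | ζ ω = p ∧ ∀ k ≤ p, W k ω = f k}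
      = μp p ν {x : Fin p → ℤ |
          (ws p x p = -1 ∧ ∀ n < p, ws p x n ≠ -1) ∧ ∀ k ≤ p, ws p x k = f k} := by
    rw [← hmap, Measure.map_apply hTmeas (measSet _)]
    congr 1
    ext ω
    simp only [Set.mem_setOf_eq, Set.mem_preimage]
    rw [hzeta ω, hWT ω p le_rfl]
    refine and_congr
      (and_congr Iff.rfl (forall_congr' fun n => imp_congr_right fun hn => ?_))
      (forall_congr' fun k => imp_congr_right fun hk => ?_)
    · rw [hWT ω n (le_of_lt hn)]
    · rw [hWT ω k hk]
  have hPD : P {ω | W p ω = -1} = μp p ν {x : Fin p → ℤ | ws p x p = -1} := by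
    rw [← hmap, Measure.map_apply hTmeas (measSet _)]
    congr 1
    ext ω
    simp only [Set.mem_setOf_eq, Set.mem_preimage]
    rw [hWT ω p le_rfl]
  rw [hPA, hPB, hPC, hPD]
  exact master ν hν p f
end

section
/- Let W be a random walk with jumps ≥ -1 and p such that P(W_p = -1) > 0. Define H_n(W) = Card{ 0 ≤ j < n : W_j = min_{j ≤ k ≤ n} W_k }, Ŵ^p the time-space reversal of (W_k)_{0 ≤ k ≤ p}, γ_p(k) = p ∧ ( t( -min_{0 ≤ i ≤ k} W_i, Ŵ^p ) - 1 )_+, and M_k = L_p(Ŵ^p) - L_{γ_p(k)}(Ŵ^p) for 0 ≤ k ≤ p. Then P(· | W_p = -1)-almost surely, for every l ∈ {0,...,p}: M_l = Card{ 0 ≤ j < p : W_j = min_{j ≤ k ≤ p} W_k and W_j ≤ -1 + min_{0 ≤ k ≤ l} W_k }. -/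
open MeasureTheory

lemma eq_sInf_image_Icc_iff {w : ℕ → ℤ} {a b j : ℕ} (hj : j ∈ Set.Icc a b) :
    w j = sInf (w '' Set.Icc a b) ↔ ∀ k ∈ Set.Icc a b, w j ≤ w k := by
  have hfin : (w '' Set.Icc a b).Finite := (Set.finite_Icc a b).image w
  have hne : (w '' Set.Icc a b).Nonempty := ⟨w j, ⟨j, hj, rfl⟩⟩
  constructor
  · intro h k hk; rw [h]; exact csInf_le hfin.bddBelow ⟨k, hk, rfl⟩
  · intro h
    exact le_antisymm (le_csInf hne (by rintro x ⟨k, hk, rfl⟩; exact h k hk))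
      (csInf_le hfin.bddBelow ⟨j, hj, rfl⟩)

lemma eq_sSup_image_Icc_iff {w : ℕ → ℤ} {a b j : ℕ} (hj : j ∈ Set.Icc a b) :
    w j = sSup (w '' Set.Icc a b) ↔ ∀ k ∈ Set.Icc a b, w k ≤ w j := by
  have hfin : (w '' Set.Icc a b).Finite := (Set.finite_Icc a b).image w
  have hne : (w '' Set.Icc a b).Nonempty := ⟨w j, ⟨j, hj, rfl⟩⟩
  constructor
  · intro h k hk; rw [h]; exact le_csSup hfin.bddAbove ⟨k, hk, rfl⟩
  · intro h
    exact le_antisymm (le_csSup hfin.bddAbove ⟨j, hj, rfl⟩)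
      (csSup_le hne (by rintro x ⟨k, hk, rfl⟩; exact h k hk))

lemma pathM_det (w : ℕ → ℤ) (p : ℕ) (hp : 1 ≤ p) (hwp : w p = -1) (l : ℕ) :
    pathM w p l =
      {j : ℕ | j < p ∧ w j = sInf (w '' Set.Icc j p) ∧
        w j ≤ -1 + sInf (w '' Set.Icc 0 l)}.ncard := by
  set m : ℤ := sInf (w '' Set.Icc 0 l) with hm
  have hrev : ∀ k, pathRev w p k = -1 - w (p - k) := by
    intro k; unfold pathRev; rw [hwp]
  -- key passage equivalence
  have K : ∀ j : ℕ, (-m ≤ pathRev w p j ↔ w (p - j) ≤ -1 + m) := by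
    intro j; rw [hrev]; constructor <;> intro h <;> linarith
  -- record equivalence
  have hrec : ∀ j : ℕ, 0 < j → j ≤ p →
      (pathRev w p j = sSup (pathRev w p '' Set.Icc 0 j) ↔
        w (p - j) = sInf (w '' Set.Icc (p - j) p)) := by
    intro j hj0 hjp
    rw [eq_sSup_image_Icc_iff (Set.mem_Icc.mpr ⟨Nat.zero_le _, le_refl j⟩),
      eq_sInf_image_Icc_iff (Set.mem_Icc.mpr ⟨le_refl _, Nat.sub_le p j⟩)]
    constructor
    · intro h i hi
      rw [Set.mem_Icc] at hi
      have hk : p - i ∈ Set.Icc 0 j := Set.mem_Icc.mpr ⟨Nat.zero_le _, by omega⟩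
      have := h (p - i) hk
      rw [hrev, hrev] at this
      have hpi : p - (p - i) = i := by omega
      rw [hpi] at this
      linarith
    · intro h k hk
      rw [Set.mem_Icc] at hk
      have : w (p - j) ≤ w (p - k) := h (p - k) (Set.mem_Icc.mpr ⟨by omega, by omega⟩)
      rw [hrev, hrev]; linarith
  set D : Set ℕ := {j : ℕ | j ≤ p ∧ -m ≤ pathRev w p j} with hD
  have hfp : firstPassage p (-m) (pathRev w p) = sInf ((fun j : ℕ => (j : ℕ∞)) '' D) := rfl
  by_cases hDne : D.Nonempty
  · -- nonempty case
    set t₀ : ℕ := sInf D with ht₀def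
    have ht₀ : t₀ ∈ D := Nat.sInf_mem hDne
    have ht₀p : t₀ ≤ p := ht₀.1
    have htcoe : firstPassage p (-m) (pathRev w p) = (t₀ : ℕ∞) := by
      rw [hfp]
      apply le_antisymm (sInf_le (Set.mem_image_of_mem _ ht₀))
      apply le_sInf
      rintro x ⟨j, hj, rfl⟩
      show (t₀ : ℕ∞) ≤ (j : ℕ∞)
      exact_mod_cast Nat.sInf_le hj
    have hγ : gammaP w p l = t₀ - 1 := by
      unfold gammaP
      rw [← hm, htcoe]
      rw [show ((t₀ : ℕ∞) - 1) = ((t₀ - 1 : ℕ) : ℕ∞) from (ENat.coe_sub t₀ 1).symm]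
      rw [min_eq_right (by exact_mod_cast (by omega : t₀ - 1 ≤ p) : ((t₀ - 1 : ℕ) : ℕ∞) ≤ (p : ℕ∞))]
      exact ENat.toNat_coe _
    set γ : ℕ := t₀ - 1 with hγdef
    have hγp : γ ≤ p := by omega
    set A : ℕ → Set ℕ := fun s =>
      {j : ℕ | 0 < j ∧ j ≤ s ∧ pathRev w p j = sSup (pathRev w p '' Set.Icc 0 j)} with hA
    have hfin : (A p).Finite :=
      Set.Finite.subset (Set.finite_Icc 1 p)
        (fun j hj => Set.mem_Icc.mpr ⟨hj.1, hj.2.1⟩)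
    have hsub : A γ ⊆ A p := fun j hj => ⟨hj.1, hj.2.1.trans hγp, hj.2.2⟩
    have hM : pathM w p l = ((A p) \ (A γ)).ncard := by
      unfold pathM pathL
      rw [hγ, Set.ncard_diff hsub (hfin.subset hsub)]
    rw [hM]
    -- characterize membership in the difference
    have hdiff : A p \ A γ = {j : ℕ | γ < j ∧ j ≤ p ∧
        pathRev w p j = sSup (pathRev w p '' Set.Icc 0 j)} := by
      ext j
      simp only [hA, Set.mem_diff, Set.mem_setOf_eq]
      constructor
      · rintro ⟨⟨h0, hjp, hr⟩, hnot⟩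
        refine ⟨?_, hjp, hr⟩
        by_contra hle
        exact hnot ⟨h0, by omega, hr⟩
      · rintro ⟨hγj, hjp, hr⟩
        exact ⟨⟨by omega, hjp, hr⟩, fun h => absurd h.2.1 (by omega)⟩
    rw [hdiff]
    -- the level condition characterization
    have hlevel : ∀ j : ℕ, 0 < j → j ≤ p →
        pathRev w p j = sSup (pathRev w p '' Set.Icc 0 j) →
        (γ < j ↔ w (p - j) ≤ -1 + m) := by
      intro j hj0 hjp hr
      constructor
      · intro hγj
        have hjt : t₀ ≤ j := by omega
        have hmin := (hrec j hj0 hjp).mp hr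
        rw [eq_sInf_image_Icc_iff (Set.mem_Icc.mpr ⟨le_refl _, Nat.sub_le p j⟩)] at hmin
        have h1 : w (p - j) ≤ w (p - t₀) :=
          hmin (p - t₀) (Set.mem_Icc.mpr ⟨by omega, by omega⟩)
        have h2 : w (p - t₀) ≤ -1 + m := (K t₀).mp ht₀.2
        linarith
      · intro hle
        have : j ∈ D := ⟨hjp, (K j).mpr hle⟩
        have := Nat.sInf_le this
        omega
    -- bijection with the target set
    have himg : {j : ℕ | j < p ∧ w j = sInf (w '' Set.Icc j p) ∧ w j ≤ -1 + m} =
        (fun j => p - j) '' {j : ℕ | γ < j ∧ j ≤ p ∧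
          pathRev w p j = sSup (pathRev w p '' Set.Icc 0 j)} := by
      ext i
      simp only [Set.mem_setOf_eq, Set.mem_image]
      constructor
      · rintro ⟨hip, hmin, hle⟩
        refine ⟨p - i, ⟨?_, by omega, ?_⟩, by omega⟩
        · -- γ < p - i
          have hj0 : 0 < p - i := by omega
          have hjp : p - i ≤ p := Nat.sub_le _ _
          have hpi : p - (p - i) = i := by omega
          have hr : pathRev w p (p - i) =
              sSup (pathRev w p '' Set.Icc 0 (p - i)) := by
            rw [hrec (p - i) hj0 hjp, hpi]; exact hmin
          exact (hlevel (p - i) hj0 hjp hr).mpr (by rw [hpi]; exact hle)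
        · have hj0 : 0 < p - i := by omega
          have hpi : p - (p - i) = i := by omega
          rw [hrec (p - i) hj0 (Nat.sub_le _ _), hpi]; exact hmin
      · rintro ⟨j, ⟨hγj, hjp, hr⟩, rfl⟩
        have hj0 : 0 < j := by omega
        refine ⟨by omega, (hrec j hj0 hjp).mp hr, (hlevel j hj0 hjp hr).mp hγj⟩
    rw [himg]
    symm
    apply Set.ncard_image_of_injOn
    intro x hx y hy hxy
    have hx2 := hx.2.1
    have hy2 := hy.2.1
    simp only at hxy
    omega
  · -- empty case : first passage time is infinite
    have hDempty : D = ∅ := Set.not_nonempty_iff_eq_empty.mp hDne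
    have ht : firstPassage p (-m) (pathRev w p) = ⊤ := by
      rw [hfp, hDempty]; simp
    have hγ : gammaP w p l = p := by
      unfold gammaP
      rw [← hm, ht]
      simp
    have hM : pathM w p l = 0 := by
      unfold pathM; rw [hγ]; exact Nat.sub_self _
    rw [hM]
    symm
    have hfinT : ({j : ℕ | j < p ∧ w j = sInf (w '' Set.Icc j p) ∧
        w j ≤ -1 + m}).Finite :=
      Set.Finite.subset (Set.finite_Icc 0 p)
        (fun j hj => Set.mem_Icc.mpr ⟨Nat.zero_le _, hj.1.le⟩)
    rw [Set.ncard_eq_zero hfinT]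
    ext i
    simp only [Set.mem_setOf_eq, Set.mem_empty_iff_false, iff_false, not_and]
    intro hip _ hle
    have : p - i ∈ D := by
      refine ⟨Nat.sub_le _ _, (K (p - i)).mpr ?_⟩
      rw [show p - (p - i) = i by omega]
      exact hle
    rw [hDempty] at this
    exact this.elim

/-- `P(· | W_p = -1)`-almost surely, for every `l ∈ {0,…,p}`,
`M_l = Card{ 0 ≤ j < p : W_j = min_{j ≤ k ≤ p} W_k and
W_j ≤ -1 + min_{0 ≤ k ≤ l} W_k }`. -/
theorem M_combinatorial_formula {Ω : Type*} [MeasurableSpace Ω] (P : Measure Ω)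
    [IsProbabilityMeasure P]
    (ν : Measure ℤ) [IsProbabilityMeasure ν] (hν : ν {k : ℤ | k < -1} = 0)
    (ξ : ℕ → Ω → ℤ) (hmeas : ∀ i, Measurable (ξ i))
    (hindep : ProbabilityTheory.iIndepFun ξ P)
    (hdist : ∀ i, Measure.map (ξ i) P = ν)
    (W : ℕ → Ω → ℤ) (hW : ∀ n ω, W n ω = ∑ i ∈ Finset.range n, ξ i ω)
    (p : ℕ) (hp : 1 ≤ p) (hpos : P {ω | W p ω = -1} ≠ 0) :
    ∀ᵐ ω ∂P, W p ω = -1 → ∀ l ≤ p,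
      pathM (fun m => W m ω) p l =
        {j : ℕ | j < p ∧ W j ω = sInf ((fun m => W m ω) '' Set.Icc j p) ∧
          W j ω ≤ -1 + sInf ((fun m => W m ω) '' Set.Icc 0 l)}.ncard := by
  refine Filter.Eventually.of_forall (fun ω hωp l hl => ?_)
  exact pathM_det (fun m => W m ω) p hp hωp l
end

section
/- Let W be a random walk with jumps ≥ -1 and p with P(W_p = -1) > 0. With the notation M_k = L_p(Ŵ^p) - L_{γ_p(k)}(Ŵ^p) and H(W) the discrete height process, the law of the pair (V_0(W), V_0(H(W) + M)) under P(· | W_p = -1) equals the law of (W, H(W)) under P(· | ζ = p), where ζ = inf{ n : W_n = -1 } and all paths are restricted to {0,...,p}. -/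
open MeasureTheory

section Helpers
variable (w : ℕ → ℤ)

lemma img_fin (a b : ℕ) : (w '' Set.Icc a b).Finite := (Set.finite_Icc a b).image w

lemma img_ne {a b : ℕ} (h : a ≤ b) : (w '' Set.Icc a b).Nonempty :=
  ⟨w a, ⟨a, by simp [h], rfl⟩⟩

lemma csInf_img_le {a b j : ℕ} (h1 : a ≤ j) (h2 : j ≤ b) :
    sInf (w '' Set.Icc a b) ≤ w j :=
  csInf_le (img_fin w a b).bddBelow ⟨j, ⟨h1, h2⟩, rfl⟩

lemma le_csSup_img {a b j : ℕ} (h1 : a ≤ j) (h2 : j ≤ b) :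
    w j ≤ sSup (w '' Set.Icc a b) :=
  le_csSup (img_fin w a b).bddAbove ⟨j, ⟨h1, h2⟩, rfl⟩

lemma exists_csInf_img {a b : ℕ} (h : a ≤ b) :
    ∃ j, a ≤ j ∧ j ≤ b ∧ w j = sInf (w '' Set.Icc a b) := by
  have := (img_ne w h).csInf_mem (img_fin w a b)
  obtain ⟨j, hj, hje⟩ := this
  exact ⟨j, hj.1, hj.2, hje⟩

lemma csInf_img_eq {a b j : ℕ} (h1 : a ≤ j) (h2 : j ≤ b)
    (hlb : ∀ i, a ≤ i → i ≤ b → w j ≤ w i) : sInf (w '' Set.Icc a b) = w j := by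
  refine le_antisymm (csInf_img_le w h1 h2) ?_
  obtain ⟨i, hi1, hi2, hie⟩ := exists_csInf_img w (h1.trans h2)
  rw [← hie]; exact hlb i hi1 hi2

lemma csSup_img_eq {a b j : ℕ} (h1 : a ≤ j) (h2 : j ≤ b)
    (hub : ∀ i, a ≤ i → i ≤ b → w i ≤ w j) : sSup (w '' Set.Icc a b) = w j := by
  refine le_antisymm ?_ (le_csSup_img w h1 h2)
  have := ((img_ne w (h1.trans h2)).csSup_mem (img_fin w a b))
  obtain ⟨i, ⟨hi1, hi2⟩, hie⟩ := this
  rw [← hie]; exact hub i hi1 hi2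

/-- sSup of (c - ·) image is c - sInf. -/
lemma sSup_const_sub {a b : ℕ} (h : a ≤ b) (c : ℤ) :
    sSup ((fun z => c - w z) '' Set.Icc a b) = c - sInf (w '' Set.Icc a b) := by
  obtain ⟨j, hj1, hj2, hje⟩ := exists_csInf_img w h
  have h2 : sSup ((fun z => c - w z) '' Set.Icc a b) = c - w j := by
    refine csSup_img_eq (fun z => c - w z) hj1 hj2 (fun i hi1 hi2 => ?_)
    have h3 := csInf_img_le w hi1 hi2
    have h4 := hje
    show c - w i ≤ c - w j
    omega
  rw [h2, ← hje]

lemma sInf_img_sub_const {a b : ℕ} (h : a ≤ b) (c : ℤ) :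
    sInf ((fun z => w z - c) '' Set.Icc a b) = sInf (w '' Set.Icc a b) - c := by
  obtain ⟨j, hj1, hj2, hje⟩ := exists_csInf_img w h
  have h2 : sInf ((fun z => w z - c) '' Set.Icc a b) = w j - c := by
    refine csInf_img_eq (fun z => w z - c) hj1 hj2 (fun i hi1 hi2 => ?_)
    have h3 := csInf_img_le w hi1 hi2
    have h4 := hje
    show w j - c ≤ w i - c
    omega
  rw [h2, ← hje]

/-- splitting the min over a concatenated interval -/
lemma sInf_img_split {a b c : ℕ} (h1 : a ≤ b) (h2 : b ≤ c) :
    sInf (w '' Set.Icc a c) =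
      min (sInf (w '' Set.Icc a b)) (sInf (w '' Set.Icc b c)) := by
  obtain ⟨j, hj1, hj2, hje⟩ := exists_csInf_img w (h1.trans h2)
  rw [← hje]
  rcases le_or_gt j b with hjb | hjb
  · have hle : sInf (w '' Set.Icc a b) ≤ w j := csInf_img_le w hj1 hjb
    have hge : w j ≤ sInf (w '' Set.Icc a b) := by
      obtain ⟨i, hi1, hi2, hie⟩ := exists_csInf_img w h1
      rw [← hie, hje]; exact csInf_img_le w hi1 (hi2.trans h2)
    have h3 : w j ≤ sInf (w '' Set.Icc b c) := by
      obtain ⟨i, hi1, hi2, hie⟩ := exists_csInf_img w h2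
      rw [← hie, hje]; exact csInf_img_le w (h1.trans hi1) hi2
    omega
  · have hle : sInf (w '' Set.Icc b c) ≤ w j := csInf_img_le w hjb.le hj2
    have hge : w j ≤ sInf (w '' Set.Icc b c) := by
      obtain ⟨i, hi1, hi2, hie⟩ := exists_csInf_img w h2
      rw [← hie, hje]; exact csInf_img_le w (h1.trans hi1) hi2
    have h3 : w j ≤ sInf (w '' Set.Icc a b) := by
      obtain ⟨i, hi1, hi2, hie⟩ := exists_csInf_img w h1
      rw [← hie, hje]; exact csInf_img_le w hi1 (hi2.trans h2)
    omega

lemma sInf_img_congr {w w' : ℕ → ℤ} {a b : ℕ} (h : ∀ i, a ≤ i → i ≤ b → w i = w' i) :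
    sInf (w '' Set.Icc a b) = sInf (w' '' Set.Icc a b) := by
  congr 1; ext z
  constructor
  · rintro ⟨i, ⟨hi1, hi2⟩, rfl⟩; exact ⟨i, ⟨hi1, hi2⟩, (h i hi1 hi2).symm⟩
  · rintro ⟨i, ⟨hi1, hi2⟩, rfl⟩; exact ⟨i, ⟨hi1, hi2⟩, h i hi1 hi2⟩

lemma sSup_img_congr {w w' : ℕ → ℤ} {a b : ℕ} (h : ∀ i, a ≤ i → i ≤ b → w i = w' i) :
    sSup (w '' Set.Icc a b) = sSup (w' '' Set.Icc a b) := by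
  congr 1; ext z
  constructor
  · rintro ⟨i, ⟨hi1, hi2⟩, rfl⟩; exact ⟨i, ⟨hi1, hi2⟩, (h i hi1 hi2).symm⟩
  · rintro ⟨i, ⟨hi1, hi2⟩, rfl⟩; exact ⟨i, ⟨hi1, hi2⟩, h i hi1 hi2⟩

lemma sInf_img_singleton (a : ℕ) : sInf (w '' Set.Icc a a) = w a := by
  rw [Set.Icc_self, Set.image_singleton, csInf_singleton]

end Helpers

section FirstMin
variable (w : ℕ → ℤ) (p : ℕ)

lemma firstMin_mem : firstMin p w ≤ p ∧ ∀ j ≤ p, w (firstMin p w) ≤ w j := by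
  have hne : {k : ℕ | k ≤ p ∧ ∀ j ≤ p, w k ≤ w j}.Nonempty := by
    obtain ⟨j, hj1, hj2, hje⟩ := exists_csInf_img w (Nat.zero_le p)
    exact ⟨j, hj2, fun i hi => by rw [hje]; exact csInf_img_le w (Nat.zero_le i) hi⟩
  exact Nat.sInf_mem hne

lemma firstMin_le : firstMin p w ≤ p := (firstMin_mem w p).1

lemma firstMin_min : ∀ j ≤ p, w (firstMin p w) ≤ w j := (firstMin_mem w p).2

lemma firstMin_strict : ∀ j < firstMin p w, w (firstMin p w) < w j := by
  intro j hj
  have hnotin : j ∉ {k : ℕ | k ≤ p ∧ ∀ j ≤ p, w k ≤ w j} := Nat.notMem_of_lt_sInf hj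
  have hjp : j ≤ p := hj.le.trans (firstMin_le w p)
  simp only [Set.mem_setOf_eq, not_and, not_forall] at hnotin
  obtain ⟨i, hip, hlt⟩ := hnotin hjp
  calc w (firstMin p w) ≤ w i := firstMin_min w p i hip
  _ < w j := by omega

lemma sInf_img_firstMin : sInf (w '' Set.Icc 0 p) = w (firstMin p w) :=
  csInf_img_eq w (Nat.zero_le _) (firstMin_le w p)
    (fun i _ hi => firstMin_min w p i hi)

/-- characterization of sInf for Nat sets -/
lemma Nat_sInf_eq {S : Set ℕ} {n : ℕ} (h1 : n ∈ S) (h2 : ∀ j < n, j ∉ S) :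
    sInf S = n := by
  refine le_antisymm (Nat.sInf_le h1) ?_
  by_contra hc
  push_neg at hc
  exact h2 _ hc (Nat.sInf_mem ⟨n, h1⟩)

lemma firstMin_eq {G : ℕ} (hG : G ≤ p) (hmin : ∀ j ≤ p, w G ≤ w j)
    (hstrict : ∀ j < G, w G < w j) : firstMin p w = G := by
  refine Nat_sInf_eq ⟨hG, hmin⟩ (fun j hj hmem => ?_)
  have := hmem.2 G hG
  have := hstrict j hj
  omega

end FirstMin

section Cards
open Finset in
lemma pathHeight_eq_card (w : ℕ → ℤ) (n : ℕ) [DecidablePred (fun j => w j = sInf (w '' Set.Icc j n))] :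
    pathHeight w n
      = ((Finset.range n).filter (fun j => w j = sInf (w '' Set.Icc j n))).card := by
  rw [pathHeight, ← Set.ncard_coe_finset]
  congr 1
  ext j
  simp [Finset.mem_filter, Finset.mem_range]

open Finset in
lemma pathL_eq_card (w : ℕ → ℤ) (n : ℕ) [DecidablePred (fun j => w j = sSup (w '' Set.Icc 0 j))] :
    pathL w n
      = ((Finset.Icc 1 n).filter (fun j => w j = sSup (w '' Set.Icc 0 j))).card := by
  rw [pathL, ← Set.ncard_coe_finset]
  congr 1
  ext j
  simp only [Set.mem_setOf_eq, Finset.coe_filter, Finset.mem_Icc]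
  constructor
  · rintro ⟨h1, h2, h3⟩; exact ⟨⟨h1, h2⟩, h3⟩
  · rintro ⟨⟨h1, h2⟩, h3⟩; exact ⟨h1, h2, h3⟩

lemma pathHeight_zero (w : ℕ → ℤ) : pathHeight w 0 = 0 := by
  classical
  rw [pathHeight_eq_card]; simp

lemma pathL_zero (w : ℕ → ℤ) : pathL w 0 = 0 := by
  classical
  rw [pathL_eq_card]; simp

open Finset in
lemma pathL_split (w : ℕ → ℤ) {γ n : ℕ} (h : γ ≤ n) :
    pathL w n = pathL w γ +
      (((Finset.Ioc γ n)).filter (fun j => w j = sSup (w '' Set.Icc 0 j))).card := by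
  classical
  rw [pathL_eq_card, pathL_eq_card]
  have hsplit : Finset.Icc 1 n = Finset.Icc 1 γ ∪ Finset.Ioc γ n := by
    ext j; simp only [Finset.mem_Icc, Finset.mem_union, Finset.mem_Ioc]; omega
  rw [hsplit, Finset.filter_union, Finset.card_union_of_disjoint]
  exact Finset.disjoint_filter_filter (by
    simp only [Finset.disjoint_left, Finset.mem_Icc, Finset.mem_Ioc]; omega)

lemma pathL_congr {w w' : ℕ → ℤ} {n : ℕ} (h : ∀ i ≤ n, w i = w' i) :
    pathL w n = pathL w' n := by
  classical
  rw [pathL_eq_card, pathL_eq_card]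
  congr 1
  apply Finset.filter_congr
  intro j hj
  simp only [Finset.mem_Icc] at hj
  rw [← h j hj.2, sSup_img_congr (fun i _ hi => h i (hi.trans hj.2))]

lemma pathHeight_congr {w w' : ℕ → ℤ} {n : ℕ} (h : ∀ i ≤ n, w i = w' i) :
    pathHeight w n = pathHeight w' n := by
  classical
  rw [pathHeight_eq_card, pathHeight_eq_card]
  congr 1
  apply Finset.filter_congr
  intro j hj
  simp only [Finset.mem_range] at hj
  rw [← h j hj.le, sInf_img_congr (fun i hi1 hi2 => h i hi2)]

end Cards

section Passage

lemma pathRev_zero (w : ℕ → ℤ) (p : ℕ) : pathRev w p 0 = 0 := by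
  simp [pathRev]

lemma firstPassage_empty {z : ℕ} {a : ℤ} {w : ℕ → ℤ} (h : ∀ j ≤ z, w j < a) :
    firstPassage z a w = ⊤ := by
  have he : {j : ℕ | j ≤ z ∧ a ≤ w j} = ∅ := by
    ext j
    simp only [Set.mem_setOf_eq, Set.mem_empty_iff_false, iff_false, not_and, not_le]
    exact fun hj => h j hj
  show sInf ((fun j : ℕ => (j : ℕ∞)) '' {j : ℕ | j ≤ z ∧ a ≤ w j}) = ⊤
  rw [he]
  simp

lemma firstPassage_eq {z : ℕ} {a : ℤ} {w : ℕ → ℤ} (h : ∃ j, j ≤ z ∧ a ≤ w j) :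
    firstPassage z a w = ((sInf {j : ℕ | j ≤ z ∧ a ≤ w j} : ℕ) : ℕ∞) := by
  rw [firstPassage]
  refine le_antisymm (sInf_le ⟨_, Nat.sInf_mem h, rfl⟩) (le_sInf ?_)
  rintro b ⟨j, hj, rfl⟩
  exact Nat.cast_le.mpr (Nat.sInf_le hj)

lemma gammaP_of_empty {w : ℕ → ℤ} {p k : ℕ}
    (h : ∀ j ≤ p, pathRev w p j < -(sInf (w '' Set.Icc 0 k))) : gammaP w p k = p := by
  rw [gammaP, firstPassage_empty h]
  simp

lemma min_toNat_aux {p n : ℕ} (h : n ≤ p) :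
    (min (p : ℕ∞) ((n : ℕ∞) - 1)).toNat = n - 1 := by
  rw [show ((n : ℕ∞) - 1) = ((n - 1 : ℕ) : ℕ∞) by rw [ENat.coe_sub, Nat.cast_one],
    min_eq_right (by exact_mod_cast (show n - 1 ≤ p by omega)), ENat.toNat_coe]

lemma gammaP_of_nonempty {w : ℕ → ℤ} {p k : ℕ}
    (h : ∃ j, j ≤ p ∧ -(sInf (w '' Set.Icc 0 k)) ≤ pathRev w p j) :
    gammaP w p k = sInf {j : ℕ | j ≤ p ∧ -(sInf (w '' Set.Icc 0 k)) ≤ pathRev w p j} - 1 := by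
  have htp : sInf {j : ℕ | j ≤ p ∧ -(sInf (w '' Set.Icc 0 k)) ≤ pathRev w p j} ≤ p :=
    (Nat.sInf_mem h).1
  rw [gammaP, firstPassage_eq h, min_toNat_aux htp]

end Passage

section Mlemmas
variable {w : ℕ → ℤ} {p : ℕ}

/-- time reversal of min-records to max-records -/
lemma rev_record_iff (hwp : w p = -1) {j : ℕ} (hj : j ≤ p) :
    pathRev w p j = sSup (pathRev w p '' Set.Icc 0 j)
      ↔ w (p - j) = sInf (w '' Set.Icc (p - j) p) := by
  have himg : pathRev w p '' Set.Icc 0 j = (fun i => w p - w i) '' Set.Icc (p - j) p := by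
    ext z
    simp only [Set.mem_image, Set.mem_Icc, pathRev]
    constructor
    · rintro ⟨l, ⟨_, hl2⟩, rfl⟩
      exact ⟨p - l, ⟨by omega, by omega⟩, rfl⟩
    · rintro ⟨i, ⟨hi1, hi2⟩, rfl⟩
      exact ⟨p - i, ⟨by omega, by omega⟩, by rw [show p - (p - i) = i by omega]⟩
  have hsub : sSup ((fun i => w p - w i) '' Set.Icc (p - j) p)
      = w p - sInf (w '' Set.Icc (p - j) p) := sSup_const_sub w (by omega) (w p)
  rw [himg, hsub, pathRev]
  constructor <;> intro h <;> omega

/-- master reversal counting lemma with threshold -/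
lemma rev_count (hwp : w p = -1) (c : ℤ) :
    ((Finset.range p).filter
      (fun i => w i = sInf (w '' Set.Icc i p) ∧ w i < c)).card
    = ((Finset.Ioc 0 p).filter
      (fun j => pathRev w p j = sSup (pathRev w p '' Set.Icc 0 j) ∧ w (p - j) < c)).card := by
  classical
  refine Finset.card_bij' (fun i _ => p - i) (fun j _ => p - j) ?_ ?_ ?_ ?_
  · intro i hi
    simp only [Finset.mem_filter, Finset.mem_range] at hi
    obtain ⟨hip, hrec, hval⟩ := hi
    simp only [Finset.mem_filter, Finset.mem_Ioc]
    have hpi : p - (p - i) = i := by omega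
    refine ⟨⟨by omega, by omega⟩, ?_, ?_⟩
    · rw [rev_record_iff hwp (by omega), hpi]; exact hrec
    · rw [hpi]; exact hval
  · intro j hj
    simp only [Finset.mem_filter, Finset.mem_Ioc] at hj
    obtain ⟨⟨hj0, hjp⟩, hrec, hval⟩ := hj
    simp only [Finset.mem_filter, Finset.mem_range]
    rw [rev_record_iff hwp hjp] at hrec
    exact ⟨by omega, hrec, hval⟩
  · intro i hi
    simp only [Finset.mem_filter, Finset.mem_range] at hi
    show p - (p - i) = i
    omega
  · intro j hj
    simp only [Finset.mem_filter, Finset.mem_Ioc] at hj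
    show p - (p - j) = j
    omega

/-- H_p(w) = L_p(ŵ) -/
lemma height_eq_pathL_rev (hwp : w p = -1) :
    pathHeight w p = pathL (pathRev w p) p := by
  classical
  set c := sSup (w '' Set.Icc 0 p) + 1 with hc
  have hlt : ∀ i ≤ p, w i < c := fun i hi => by
    have := le_csSup_img w (Nat.zero_le i) hi
    omega
  rw [pathHeight_eq_card, pathL_eq_card]
  have h1 : (Finset.range p).filter (fun j => w j = sInf (w '' Set.Icc j p))
      = (Finset.range p).filter (fun i => w i = sInf (w '' Set.Icc i p) ∧ w i < c) := by
    apply Finset.filter_congr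
    intro i hi
    simp only [Finset.mem_range] at hi
    exact ⟨fun h => ⟨h, hlt i hi.le⟩, fun h => h.1⟩
  have h2 : (Finset.Icc 1 p).filter
        (fun j => pathRev w p j = sSup (pathRev w p '' Set.Icc 0 j))
      = (Finset.Ioc 0 p).filter
        (fun j => pathRev w p j = sSup (pathRev w p '' Set.Icc 0 j) ∧ w (p - j) < c) := by
    have : Finset.Icc 1 p = Finset.Ioc 0 p := by ext j; simp; omega
    rw [this]
    apply Finset.filter_congr
    intro j hj
    simp only [Finset.mem_Ioc] at hj
    exact ⟨fun h => ⟨h, hlt _ (by omega)⟩, fun h => h.1⟩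
  rw [h1, h2, rev_count hwp c]

/-- formula for M_r as a count of low min-records -/
lemma pathM_eq_count (hwp : w p = -1) (r : ℕ) :
    pathM w p r = ((Finset.range p).filter
      (fun i => w i = sInf (w '' Set.Icc i p) ∧ w i < sInf (w '' Set.Icc 0 r))).card := by
  classical
  set c := sInf (w '' Set.Icc 0 r) with hc
  by_cases hA : ∃ j, j ≤ p ∧ -c ≤ pathRev w p j
  · set t₀ := sInf {j : ℕ | j ≤ p ∧ -c ≤ pathRev w p j} with ht
    have hmem := Nat.sInf_mem hA
    have htp : t₀ ≤ p := hmem.1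
    have htw : -c ≤ pathRev w p t₀ := hmem.2
    have hγ : gammaP w p r = t₀ - 1 := gammaP_of_nonempty hA
    rw [pathM, hγ, pathL_split (pathRev w p) (show t₀ - 1 ≤ p by omega)]
    rw [Nat.add_sub_cancel_left]
    rw [rev_count hwp c]
    congr 1
    have hIoc : Finset.Ioc (t₀ - 1) p ⊆ Finset.Ioc 0 p := by
      apply Finset.Ioc_subset_Ioc_left (Nat.zero_le _)
    ext j
    simp only [Finset.mem_filter, Finset.mem_Ioc]
    constructor
    · rintro ⟨⟨hj1, hj2⟩, hrec⟩
      have hjt : t₀ ≤ j := by omega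
      refine ⟨⟨by omega, hj2⟩, hrec, ?_⟩
      have : pathRev w p t₀ ≤ sSup (pathRev w p '' Set.Icc 0 j) :=
        le_csSup_img _ (Nat.zero_le _) hjt
      rw [← hrec] at this
      simp only [pathRev] at this htw
      omega
    · rintro ⟨⟨hj1, hj2⟩, hrec, hval⟩
      have hjA : j ∈ {j : ℕ | j ≤ p ∧ -c ≤ pathRev w p j} := by
        refine ⟨hj2, ?_⟩
        simp only [pathRev]
        omega
      have := Nat.sInf_le hjA
      exact ⟨⟨by omega, hj2⟩, hrec⟩
  · push_neg at hA
    have hγ : gammaP w p r = p := gammaP_of_empty (by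
      intro j hj; exact hA j hj)
    rw [pathM, hγ, Nat.sub_self]
    symm
    rw [Finset.card_eq_zero, Finset.filter_eq_empty_iff]
    intro i hi
    simp only [Finset.mem_range] at hi
    rintro ⟨hrec, hval⟩
    have := hA (p - i) (by omega)
    simp only [pathRev] at this
    rw [show p - (p - i) = i by omega] at this
    omega

/-- M vanishes from the first minimum onwards -/
lemma pathM_eq_zero (hwp : w p = -1) {k : ℕ} (hGk : firstMin p w ≤ k) (hkp : k ≤ p) :
    pathM w p k = 0 := by
  classical
  rw [pathM_eq_count hwp]
  rw [Finset.card_eq_zero, Finset.filter_eq_empty_iff]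
  intro i hi
  simp only [Finset.mem_range] at hi
  rintro ⟨hrec, hval⟩
  have h1 : sInf (w '' Set.Icc 0 k) ≤ w (firstMin p w) :=
    csInf_img_le w (Nat.zero_le _) hGk
  have h2 : w (firstMin p w) ≤ w i := firstMin_min w p i hi.le
  omega

/-- M is positive strictly before the first minimum (if G < p) -/
lemma pathM_pos (hwp : w p = -1) (hGp : firstMin p w < p) {k : ℕ}
    (hk : k < firstMin p w) : 1 ≤ pathM w p k := by
  classical
  rw [pathM_eq_count hwp]
  rw [Nat.succ_le_iff, Finset.card_pos]
  refine ⟨firstMin p w, ?_⟩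
  simp only [Finset.mem_filter, Finset.mem_range]
  refine ⟨hGp, (csInf_img_eq w le_rfl (firstMin_le w p)
    (fun i hi1 hi2 => firstMin_min w p i hi2)).symm, ?_⟩
  obtain ⟨i, hi1, hi2, hie⟩ := exists_csInf_img w (Nat.zero_le k)
  rw [← hie]
  exact firstMin_strict w p i (by omega)

/-- M_0 = L_p(ŵ) -/
lemma pathM_zero_eq (hw0 : w 0 = 0) : pathM w p 0 = pathL (pathRev w p) p := by
  have hc : sInf (w '' Set.Icc 0 0) = 0 := by rw [sInf_img_singleton, hw0]
  have hA : ∃ j, j ≤ p ∧ -(sInf (w '' Set.Icc 0 0)) ≤ pathRev w p j :=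
    ⟨0, Nat.zero_le _, by rw [hc, pathRev_zero]; simp⟩
  have ht : sInf {j : ℕ | j ≤ p ∧ -(sInf (w '' Set.Icc 0 0)) ≤ pathRev w p j} = 0 :=
    Nat.sInf_eq_zero.2 (Or.inl ⟨Nat.zero_le _, by rw [hc, pathRev_zero]; simp⟩)
  have hγ : gammaP w p 0 = 0 := by rw [gammaP_of_nonempty hA, ht]
  rw [pathM, hγ, pathL_zero, Nat.sub_zero]

end Mlemmas

section Verv
variable {w : ℕ → ℤ} {p : ℕ}

lemma img_shift {f g : ℕ → ℤ} {u v s : ℕ} (h : ∀ l, u ≤ l → l ≤ v → f l = g (l + s)) :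
    f '' Set.Icc u v = g '' Set.Icc (u + s) (v + s) := by
  ext z
  simp only [Set.mem_image, Set.mem_Icc]
  constructor
  · rintro ⟨l, ⟨h1, h2⟩, rfl⟩
    exact ⟨l + s, ⟨by omega, by omega⟩, (h l h1 h2).symm⟩
  · rintro ⟨i, ⟨h1, h2⟩, rfl⟩
    exact ⟨i - s, ⟨by omega, by omega⟩,
      by rw [h (i - s) (by omega) (by omega), show i - s + s = i by omega]⟩

lemma verv_le {k : ℕ} (hk : k ≤ p - firstMin p w) :
    vervaat0 p w k = w (k + firstMin p w) - w (firstMin p w) := by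
  simp only [vervaat0, sInf_img_firstMin]
  rw [if_pos hk]

lemma verv_ge (hw0 : w 0 = 0) (hwp : w p = -1) {k : ℕ}
    (hk1 : p - firstMin p w ≤ k) (hk2 : k ≤ p) :
    vervaat0 p w k = w (k + firstMin p w - p) - 1 - w (firstMin p w) := by
  have hGp := firstMin_le w p
  simp only [vervaat0, sInf_img_firstMin]
  by_cases h : k ≤ p - firstMin p w
  · have hkeq : k = p - firstMin p w := le_antisymm h hk1
    rw [if_pos h, show k + firstMin p w - p = 0 by omega, hw0,
      show k + firstMin p w = p by omega, hwp]
    ring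
  · rw [if_neg h, hw0, hwp]
    ring

lemma firstMin_pos (hw0 : w 0 = 0) (hwp : w p = -1) : 1 ≤ firstMin p w := by
  rcases Nat.eq_zero_or_pos (firstMin p w) with h | h
  · have h2 := firstMin_min w p p le_rfl
    rw [h, hw0, hwp] at h2
    omega
  · exact h

/-- Case k ≤ p - G of the Vervaat height identity. -/
lemma height_verv_le (hwp : w p = -1) {k : ℕ}
    (hk : k ≤ p - firstMin p w) :
    pathHeight (vervaat0 p w) k = pathHeight w (firstMin p w + k) := by
  classical
  have hGp : firstMin p w ≤ p := firstMin_le w p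
  set G := firstMin p w with hG
  have key : ∀ j, j < k →
      ((vervaat0 p w j = sInf (vervaat0 p w '' Set.Icc j k)) ↔
        (w (j + G) = sInf (w '' Set.Icc (j + G) (k + G)))) := by
    intro j hj
    have e1 : vervaat0 p w j = w (j + G) - w G := verv_le (by omega)
    have himg : vervaat0 p w '' Set.Icc j k
        = (fun z => w z - w G) '' Set.Icc (j + G) (k + G) :=
      img_shift (fun l h1 h2 => verv_le (by omega))
    rw [e1, himg, sInf_img_sub_const w (by omega : j + G ≤ k + G) (w G)]
    omega
  rw [pathHeight_eq_card, pathHeight_eq_card]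
  have hsplit : Finset.range (G + k) = Finset.range G ∪ Finset.Ico G (G + k) := by
    ext j; simp only [Finset.mem_range, Finset.mem_union, Finset.mem_Ico]; omega
  rw [hsplit, Finset.filter_union, Finset.card_union_of_disjoint (by
    refine Finset.disjoint_filter_filter ?_
    simp only [Finset.disjoint_left, Finset.mem_range, Finset.mem_Ico]
    omega)]
  have h1 : (Finset.range G).filter (fun j => w j = sInf (w '' Set.Icc j (G + k))) = ∅ := by
    rw [Finset.filter_eq_empty_iff]
    intro j hj
    simp only [Finset.mem_range] at hj
    intro heq
    have h2 : sInf (w '' Set.Icc j (G + k)) ≤ w G := csInf_img_le w (by omega) (by omega)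
    have h3 := firstMin_strict w p j hj
    rw [← hG] at h3
    omega
  rw [h1, Finset.card_empty, Nat.zero_add]
  refine Finset.card_bij' (fun j _ => j + G) (fun j _ => j - G) ?_ ?_ ?_ ?_
  · intro j hj
    simp only [Finset.mem_filter, Finset.mem_range] at hj
    simp only [Finset.mem_filter, Finset.mem_Ico]
    refine ⟨by omega, ?_⟩
    rw [show G + k = k + G by omega]
    exact (key j hj.1).1 hj.2
  · intro j hj
    simp only [Finset.mem_filter, Finset.mem_Ico] at hj
    simp only [Finset.mem_filter, Finset.mem_range]
    refine ⟨by omega, ?_⟩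
    refine (key (j - G) (by omega)).2 ?_
    rw [show j - G + G = j by omega, show k + G = G + k by omega]
    exact hj.2
  · intro j hj
    simp only [Finset.mem_filter, Finset.mem_range] at hj
    show j + G - G = j
    omega
  · intro j hj
    simp only [Finset.mem_filter, Finset.mem_Ico] at hj
    show j - G + G = j
    omega

/-- Case p - G < k ≤ p of the Vervaat height identity. -/
lemma height_verv_ge (hw0 : w 0 = 0) (hwp : w p = -1) {k : ℕ}
    (hk1 : p - firstMin p w < k) (hk2 : k ≤ p) :
    pathHeight (vervaat0 p w) k
      = pathM w p (k + firstMin p w - p) + pathHeight w (k + firstMin p w - p) := by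
  classical
  have hGp : firstMin p w ≤ p := firstMin_le w p
  set G := firstMin p w with hG
  set r := k + G - p with hr
  have hrG : r ≤ G := by omega
  have hrk : r + (p - G) = k := by omega
  -- second segment image computation
  have himg2 : vervaat0 p w '' Set.Icc (p - G) k
      = (fun z => w z - (1 + w G)) '' Set.Icc 0 r := by
    have := img_shift (f := fun z => w z - (1 + w G)) (g := vervaat0 p w)
      (u := 0) (v := r) (s := p - G) (fun l h1 h2 => by
        rw [verv_ge hw0 hwp (by omega) (by omega),
          show l + (p - G) + G - p = l by omega]
        ring)
    rw [this, Nat.zero_add, hrk]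
  -- key equivalence on the first segment
  have key1 : ∀ j, j < p - G →
      ((vervaat0 p w j = sInf (vervaat0 p w '' Set.Icc j k)) ↔
        (w (j + G) = sInf (w '' Set.Icc (j + G) p)
          ∧ w (j + G) < sInf (w '' Set.Icc 0 r))) := by
    intro j hj
    have e1 : vervaat0 p w j = w (j + G) - w G := verv_le (by omega)
    have hsp : sInf (vervaat0 p w '' Set.Icc j k)
        = min (sInf (vervaat0 p w '' Set.Icc j (p - G)))
            (sInf (vervaat0 p w '' Set.Icc (p - G) k)) :=
      sInf_img_split _ (by omega) (by omega)
    have himg1 : vervaat0 p w '' Set.Icc j (p - G)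
        = (fun z => w z - w G) '' Set.Icc (j + G) p := by
      have := img_shift (f := vervaat0 p w) (g := fun z => w z - w G)
        (u := j) (v := p - G) (s := G) (fun l h1 h2 => verv_le (by omega))
      rw [this, show p - G + G = p by omega]
    have hA : sInf (w '' Set.Icc (j + G) p) ≤ w (j + G) :=
      csInf_img_le w le_rfl (by omega)
    rw [e1, hsp, himg1, himg2,
      sInf_img_sub_const w (by omega : j + G ≤ p) (w G),
      sInf_img_sub_const w (Nat.zero_le r) (1 + w G)]
    rcases le_total (sInf (w '' Set.Icc (j + G) p) - w G)
      (sInf (w '' Set.Icc 0 r) - (1 + w G)) with hm | hm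
    · rw [min_eq_left hm]; omega
    · rw [min_eq_right hm]; omega
  -- key equivalence on the second segment
  have key2 : ∀ j, p - G ≤ j → j < k →
      ((vervaat0 p w j = sInf (vervaat0 p w '' Set.Icc j k)) ↔
        (w (j - (p - G)) = sInf (w '' Set.Icc (j - (p - G)) r))) := by
    intro j hj1 hj2
    have e1 : vervaat0 p w j = w (j - (p - G)) - (1 + w G) := by
      rw [verv_ge hw0 hwp (by omega) (by omega), show j + G - p = j - (p - G) by omega]
      ring
    have himg : vervaat0 p w '' Set.Icc j k
        = (fun z => w z - (1 + w G)) '' Set.Icc (j - (p - G)) r := by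
      have := img_shift (f := fun z => w z - (1 + w G)) (g := vervaat0 p w)
        (u := j - (p - G)) (v := r) (s := p - G) (fun l h1 h2 => by
          rw [verv_ge hw0 hwp (by omega) (by omega),
            show l + (p - G) + G - p = l by omega]
          ring)
      rw [this, show j - (p - G) + (p - G) = j by omega, hrk]
    rw [e1, himg, sInf_img_sub_const w (by omega : j - (p - G) ≤ r) (1 + w G)]
    omega
  rw [pathHeight_eq_card, pathHeight_eq_card, pathM_eq_count hwp r]
  have hsplit : Finset.range k = Finset.range (p - G) ∪ Finset.Ico (p - G) k := by
    ext j; simp only [Finset.mem_range, Finset.mem_union, Finset.mem_Ico]; omega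
  rw [hsplit, Finset.filter_union, Finset.card_union_of_disjoint (by
    refine Finset.disjoint_filter_filter ?_
    simp only [Finset.disjoint_left, Finset.mem_range, Finset.mem_Ico]
    omega)]
  congr 1
  -- first part = pathM count
  · have hge : ∀ i, i < p → w i = sInf (w '' Set.Icc i p) → G ≤ i := by
      intro i hip hrec
      by_contra hc
      push_neg at hc
      have h2 : sInf (w '' Set.Icc i p) ≤ w G := csInf_img_le w (by omega) hGp
      have h3 := firstMin_strict w p i hc
      rw [← hG] at h3
      omega
    refine Finset.card_bij' (fun j _ => j + G) (fun i _ => i - G) ?_ ?_ ?_ ?_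
    · intro j hj
      simp only [Finset.mem_filter, Finset.mem_range] at hj
      obtain ⟨hc1, hc2⟩ := (key1 j hj.1).1 hj.2
      simp only [Finset.mem_filter, Finset.mem_range]
      exact ⟨by omega, hc1, hc2⟩
    · intro i hi
      simp only [Finset.mem_filter, Finset.mem_range] at hi
      obtain ⟨hip, hrec, hval⟩ := hi
      have hGi : G ≤ i := hge i hip hrec
      simp only [Finset.mem_filter, Finset.mem_range]
      refine ⟨by omega, (key1 (i - G) (by omega)).2 ?_⟩
      rw [show i - G + G = i by omega]
      exact ⟨hrec, hval⟩
    · intro j hj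
      simp only [Finset.mem_filter, Finset.mem_range] at hj
      show j + G - G = j
      omega
    · intro i hi
      simp only [Finset.mem_filter, Finset.mem_range] at hi
      have hGi : G ≤ i := hge i hi.1 hi.2.1
      show i - G + G = i
      omega
  -- second part = height count at r
  · refine Finset.card_bij' (fun j _ => j - (p - G)) (fun j _ => j + (p - G)) ?_ ?_ ?_ ?_
    · intro j hj
      simp only [Finset.mem_filter, Finset.mem_Ico] at hj
      simp only [Finset.mem_filter, Finset.mem_range]
      exact ⟨by omega, (key2 j hj.1.1 hj.1.2).1 hj.2⟩
    · intro j hj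
      simp only [Finset.mem_filter, Finset.mem_range] at hj
      simp only [Finset.mem_filter, Finset.mem_Ico]
      refine ⟨⟨by omega, by omega⟩, ?_⟩
      refine (key2 (j + (p - G)) (by omega) (by omega)).2 ?_
      rw [show j + (p - G) - (p - G) = j by omega]
      exact hj.2
    · intro j hj
      simp only [Finset.mem_filter, Finset.mem_Ico] at hj
      show j - (p - G) + (p - G) = j
      omega
    · intro j hj
      simp only [Finset.mem_filter, Finset.mem_range] at hj
      show j + (p - G) - (p - G) = j
      omega

end Verv

/-- the corrected height path H + M -/
noncomputable def hhp (w : ℕ → ℤ) (p : ℕ) : ℕ → ℤ := fun n =>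
  (pathHeight w n : ℤ) + (pathM w p n : ℤ)

section HH
variable {w : ℕ → ℤ} {p : ℕ}

lemma height_at_firstMin : pathHeight w (firstMin p w) = 0 := by
  classical
  rw [pathHeight_eq_card, Finset.card_eq_zero, Finset.filter_eq_empty_iff]
  intro j hj
  simp only [Finset.mem_range] at hj
  intro heq
  have h1 : sInf (w '' Set.Icc j (firstMin p w)) ≤ w (firstMin p w) :=
    csInf_img_le w (by omega) le_rfl
  have h2 := firstMin_strict w p j hj
  omega

lemma hh_nonneg (n : ℕ) : 0 ≤ hhp w p n := by
  simp only [hhp]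
  positivity

lemma hh_at_firstMin (hwp : w p = -1) : hhp w p (firstMin p w) = 0 := by
  simp only [hhp, height_at_firstMin, pathM_eq_zero hwp le_rfl (firstMin_le w p)]
  simp

lemma firstMin_hh (hwp : w p = -1) (hGp : firstMin p w < p) :
    firstMin p (hhp w p) = firstMin p w := by
  refine firstMin_eq _ p (firstMin_le w p) (fun j _ => ?_) (fun j hj => ?_)
  · rw [hh_at_firstMin hwp]; exact hh_nonneg j
  · rw [hh_at_firstMin hwp]
    have := pathM_pos hwp hGp hj
    simp only [hhp]
    have : (0:ℤ) ≤ (pathHeight w j : ℤ) := by positivity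
    have h2 : (1:ℤ) ≤ (pathM w p j : ℤ) := by exact_mod_cast pathM_pos hwp hGp hj
    omega

lemma sInf_hh (hwp : w p = -1) : sInf (hhp w p '' Set.Icc 0 p) = 0 := by
  rw [csInf_img_eq (hhp w p) (Nat.zero_le _) (firstMin_le w p)
    (fun i _ _ => by rw [hh_at_firstMin hwp]; exact hh_nonneg i)]
  exact hh_at_firstMin hwp

/-- The main deterministic height identity. -/
theorem verv_height (hw0 : w 0 = 0) (hwp : w p = -1) {k : ℕ} (hk : k ≤ p) :
    vervaat0 p (hhp w p) k = (pathHeight (vervaat0 p w) k : ℤ) := by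
  have hGp : firstMin p w ≤ p := firstMin_le w p
  by_cases hGlt : firstMin p w < p
  · have hfm := firstMin_hh hwp hGlt
    have hsi := sInf_hh (p := p) hwp
    by_cases hkle : k ≤ p - firstMin p w
    · have h1 : vervaat0 p (hhp w p) k = hhp w p (k + firstMin p w) - 0 := by
        simp only [vervaat0, hfm, hsi]
        rw [if_pos (by omega : k ≤ p - firstMin p w)]
      rw [h1, height_verv_le hwp hkle]
      simp only [hhp, pathM_eq_zero hwp (by omega) (by omega : k + firstMin p w ≤ p)]
      rw [show k + firstMin p w = firstMin p w + k by omega]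
      push_cast
      ring
    · have h1 : vervaat0 p (hhp w p) k
          = hhp w p (k + firstMin p w - p) + hhp w p p - 0 - hhp w p 0 := by
        simp only [vervaat0, hfm, hsi]
        rw [if_neg hkle]
      rw [h1, height_verv_ge hw0 hwp (by omega) hk]
      simp only [hhp, pathM_eq_zero hwp hGp le_rfl, pathM_zero_eq hw0,
        height_eq_pathL_rev hwp, pathHeight_zero]
      push_cast
      ring
  · have hGp' : firstMin p w = p := le_antisymm hGp (not_lt.1 hGlt)
    have hw_nonneg : ∀ j, j < p → 0 ≤ w j := by
      intro j hj
      have := firstMin_strict w p j (by omega)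
      rw [hGp', hwp] at this
      omega
    have hL : pathL (pathRev w p) p = 0 := by
      classical
      rw [pathL_eq_card, Finset.card_eq_zero, Finset.filter_eq_empty_iff]
      intro j hj
      simp only [Finset.mem_Icc] at hj
      intro heq
      have h1 : pathRev w p 0 ≤ sSup (pathRev w p '' Set.Icc 0 j) :=
        le_csSup_img _ le_rfl (Nat.zero_le j)
      rw [pathRev_zero] at h1
      have h3 : 0 ≤ w (p - j) := hw_nonneg _ (by omega)
      have h2 : pathRev w p j = -1 - w (p - j) := by
        simp [pathRev, hwp]
      omega
    have hM : ∀ n, pathM w p n = 0 := fun n => by rw [pathM, hL]; omega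
    have hh0 : hhp w p 0 = 0 := by simp [hhp, pathHeight_zero, hM]
    have hfm0 : firstMin p (hhp w p) = 0 :=
      firstMin_eq _ p (Nat.zero_le p)
        (fun j _ => by rw [hh0]; exact hh_nonneg j) (fun j hj => by omega)
    have hs0 : sInf (hhp w p '' Set.Icc 0 p) = 0 := by
      rw [csInf_img_eq (hhp w p) le_rfl (Nat.zero_le p)
        (fun i _ _ => by rw [hh0]; exact hh_nonneg i)]
      exact hh0
    have h1 : vervaat0 p (hhp w p) k = hhp w p k - 0 := by
      simp only [vervaat0, hfm0, hs0]
      rw [if_pos (by omega : k ≤ p - 0), Nat.add_zero]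
    have hcong : pathHeight (vervaat0 p w) k = pathHeight w k := by
      refine pathHeight_congr (fun i hi => ?_)
      simp only [vervaat0, sInf_img_firstMin, hGp']
      by_cases hi0 : i ≤ p - p
      · rw [if_pos hi0, show i = 0 by omega, hw0, Nat.zero_add, hwp]
        ring
      · rw [if_neg hi0, show i + p - p = i by omega, hw0, hwp]
        ring
    rw [h1, hcong]
    simp [hhp, hM]
end HH

section Incr

/-- step sequence of increments -/
def pwX (p : ℕ) (x : Fin p → ℤ) : ℕ → ℤ := fun i => if h : i < p then x ⟨i, h⟩ else 0

/-- partial-sum path of increments -/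
def pw (p : ℕ) (x : Fin p → ℤ) : ℕ → ℤ := fun n => ∑ i ∈ Finset.range n, pwX p x i

/-- cyclic rotation of increments -/
def rotX (p s : ℕ) (x : Fin p → ℤ) : Fin p → ℤ := fun i =>
  x ⟨(i.val + s) % p, Nat.mod_lt _ (Nat.lt_of_le_of_lt (Nat.zero_le _) i.isLt)⟩

/-- excursion property of an increment vector -/
def ExcSeq (p : ℕ) (x : Fin p → ℤ) : Prop :=
  (∀ n < p, pw p x n ≠ -1) ∧ pw p x p = -1

variable {p : ℕ} {x y : Fin p → ℤ}

lemma pw_zero : pw p x 0 = 0 := by simp [pw]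

lemma pw_succ (n : ℕ) : pw p x (n + 1) = pw p x n + pwX p x n :=
  Finset.sum_range_succ _ n

lemma pwX_rot {s i : ℕ} (hi : i < p) :
    pwX p (rotX p s x) i = pwX p x ((i + s) % p) := by
  have h2 : (i + s) % p < p := Nat.mod_lt _ (by omega)
  simp only [pwX, rotX, dif_pos hi, dif_pos h2]

lemma rot_rot_eq {a b : ℕ} (hab : a + b = p) : rotX p a (rotX p b y) = y := by
  funext i
  simp only [rotX]
  congr 1
  apply Fin.ext
  show ((i.val + a) % p + b) % p = i.val
  rw [Nat.mod_add_mod, show i.val + a + b = i.val + p by omega, Nat.add_mod_right,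
    Nat.mod_eq_of_lt i.isLt]

lemma pw_rot {s k : ℕ} (hs : s ≤ p) (hk : k ≤ p) :
    pw p (rotX p s x) k = if k ≤ p - s then pw p x (s + k) - pw p x s
      else pw p x (k + s - p) + pw p x p - pw p x s := by
  by_cases hc : k ≤ p - s
  · rw [if_pos hc]
    have h1 : pw p (rotX p s x) k = ∑ i ∈ Finset.range k, pwX p x (s + i) := by
      refine Finset.sum_congr rfl (fun i hi => ?_)
      simp only [Finset.mem_range] at hi
      rw [pwX_rot (by omega), Nat.mod_eq_of_lt (by omega), Nat.add_comm]
    have e : ∑ i ∈ Finset.Ico s (s + k), pwX p x i = ∑ i ∈ Finset.range k, pwX p x (s + i) := by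
      rw [Finset.sum_Ico_eq_sum_range, Nat.add_sub_cancel_left]
    rw [h1, ← e, Finset.sum_Ico_eq_sub _ (by omega : s ≤ s + k)]
    rfl
  · rw [if_neg hc]
    push_neg at hc
    have hsplit : pw p (rotX p s x) k
        = ∑ i ∈ Finset.range (p - s), pwX p (rotX p s x) i
          + ∑ i ∈ Finset.Ico (p - s) k, pwX p (rotX p s x) i :=
      (Finset.sum_range_add_sum_Ico _ (by omega)).symm
    have h1 : ∑ i ∈ Finset.range (p - s), pwX p (rotX p s x) i
        = pw p x p - pw p x s := by
      have h1a : ∀ i ∈ Finset.range (p - s), pwX p (rotX p s x) i = pwX p x (s + i) := by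
        intro i hi
        simp only [Finset.mem_range] at hi
        rw [pwX_rot (by omega), Nat.mod_eq_of_lt (by omega), Nat.add_comm]
      have e : ∑ i ∈ Finset.Ico s p, pwX p x i = ∑ i ∈ Finset.range (p - s), pwX p x (s + i) :=
        Finset.sum_Ico_eq_sum_range _ s p
      rw [Finset.sum_congr rfl h1a, ← e, Finset.sum_Ico_eq_sub _ hs]
      rfl
    have h2 : ∑ i ∈ Finset.Ico (p - s) k, pwX p (rotX p s x) i = pw p x (k + s - p) := by
      have h2a : ∀ i ∈ Finset.Ico (p - s) k, pwX p (rotX p s x) i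
          = pwX p x (i - (p - s)) := by
        intro i hi
        simp only [Finset.mem_Ico] at hi
        rw [pwX_rot (by omega), show (i + s) = (i - (p - s)) + p by omega,
          Nat.add_mod_right, Nat.mod_eq_of_lt (by omega)]
      rw [Finset.sum_congr rfl h2a,
        Finset.sum_Ico_eq_sum_range (fun i => pwX p x (i - (p - s))) (p - s) k]
      have h2b : ∀ i ∈ Finset.range (k - (p - s)), pwX p x (p - s + i - (p - s)) = pwX p x i := by
        intro i hi
        rw [show p - s + i - (p - s) = i by omega]
      rw [Finset.sum_congr rfl h2b, show k - (p - s) = k + s - p by omega]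
      rfl
    rw [hsplit, h1, h2]
    ring

lemma pw_rot_total {s : ℕ} (hs : s ≤ p) : pw p (rotX p s x) p = pw p x p := by
  rw [pw_rot hs le_rfl]
  by_cases hc : p ≤ p - s
  · rw [if_pos hc, show s = 0 by omega]
    simp [pw_zero]
  · rw [if_neg hc, show p + s - p = s by omega]
    ring

/-- Vervaat path identity at the increments level -/
lemma verv_pw (hsum : pw p x p = -1) {k : ℕ} (hk : k ≤ p) :
    vervaat0 p (pw p x) k = pw p (rotX p (firstMin p (pw p x)) x) k := by
  have hGp : firstMin p (pw p x) ≤ p := firstMin_le _ p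
  have hG1 : 1 ≤ firstMin p (pw p x) := firstMin_pos pw_zero hsum
  rw [pw_rot hGp hk]
  by_cases hc : k ≤ p - firstMin p (pw p x)
  · rw [if_pos hc, verv_le hc, Nat.add_comm]
  · rw [if_neg hc, verv_ge pw_zero hsum (by omega) hk, hsum]
    ring

/-- the rotated bridge is an excursion -/
lemma exc_rot (hsum : pw p x p = -1) : ExcSeq p (rotX p (firstMin p (pw p x)) x) := by
  have hGp : firstMin p (pw p x) ≤ p := firstMin_le _ p
  have hG1 : 1 ≤ firstMin p (pw p x) := firstMin_pos pw_zero hsum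
  constructor
  · intro n hn
    rw [← verv_pw hsum (by omega)]
    by_cases hc : n ≤ p - firstMin p (pw p x)
    · rw [verv_le hc]
      have := firstMin_min (pw p x) p (n + firstMin p (pw p x)) (by omega)
      omega
    · rw [verv_ge pw_zero hsum (by omega) (by omega)]
      have := firstMin_strict (pw p x) p (n + firstMin p (pw p x) - p) (by omega)
      omega
  · rw [pw_rot_total hGp, hsum]

/-- nonnegativity of an excursion path with steps ≥ -1 -/
lemma exc_nonneg (hexc : ExcSeq p y) (hsteps : ∀ i, -1 ≤ y i) :
    ∀ n < p, 0 ≤ pw p y n := by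
  intro n
  induction n with
  | zero => intro _; rw [pw_zero]
  | succ m ih =>
    intro hm
    have h1 : 0 ≤ pw p y m := ih (by omega)
    have h2 : -1 ≤ pwX p y m := by
      simp only [pwX, dif_pos (show m < p by omega)]
      exact hsteps _
    have h3 := pw_succ (x := y) m
    have h4 := hexc.1 (m + 1) hm
    omega

/-- backward rotation: total sum and first minimum -/
lemma back_firstMin (hexc : ExcSeq p y) (hsteps : ∀ i, -1 ≤ y i) {u : ℕ}
    (hu1 : 1 ≤ u) (hu2 : u ≤ p) :
    firstMin p (pw p (rotX p (p - u) y)) = u := by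
  have hnn := exc_nonneg hexc hsteps
  have hval : ∀ n ≤ p, pw p (rotX p (p - u) y) n
      = if n ≤ u then pw p y (p - u + n) - pw p y (p - u)
        else pw p y (n - u) - 1 - pw p y (p - u) := by
    intro n hn
    rw [pw_rot (by omega) hn]
    by_cases hc : n ≤ p - (p - u)
    · rw [if_pos hc, if_pos (by omega)]
    · rw [if_neg hc, if_neg (by omega), show n + (p - u) - p = n - u by omega, hexc.2]
      ring
  have hwu : pw p (rotX p (p - u) y) u = -1 - pw p y (p - u) := by
    rw [hval u hu2, if_pos le_rfl, show p - u + u = p by omega, hexc.2]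
  refine firstMin_eq _ p hu2 (fun j hj => ?_) (fun j hj => ?_)
  · rw [hwu, hval j hj]
    by_cases hc : j ≤ u
    · rw [if_pos hc]
      rcases Nat.eq_or_lt_of_le hc with he | hlt
      · rw [show p - u + j = p by omega, hexc.2]
      · have := hnn (p - u + j) (by omega)
        omega
    · rw [if_neg hc]
      have := hnn (j - u) (by omega)
      omega
  · rw [hwu, hval j (by omega), if_pos (by omega)]
    have := hnn (p - u + j) (by omega)
    omega

end Incr

section Congr
variable {w w' : ℕ → ℤ} {p : ℕ}

lemma pathRev_congr (h : ∀ i ≤ p, w i = w' i) : pathRev w p = pathRev w' p := by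
  funext k
  simp only [pathRev, h p le_rfl, h (p - k) (by omega)]

lemma gammaP_congr (h : ∀ i ≤ p, w i = w' i) {k : ℕ} (hk : k ≤ p) :
    gammaP w p k = gammaP w' p k := by
  rw [gammaP, gammaP, pathRev_congr h,
    sInf_img_congr (fun i _ hi => h i (hi.trans hk))]

lemma pathM_congr (h : ∀ i ≤ p, w i = w' i) {k : ℕ} (hk : k ≤ p) :
    pathM w p k = pathM w' p k := by
  rw [pathM, pathM, pathRev_congr h, gammaP_congr h hk]

lemma firstMin_congr (h : ∀ i ≤ p, w i = w' i) : firstMin p w = firstMin p w' := by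
  rw [firstMin, firstMin]
  congr 1
  ext k
  simp only [Set.mem_setOf_eq]
  constructor
  · rintro ⟨hk, hmin⟩
    exact ⟨hk, fun j hj => by rw [← h k hk, ← h j hj]; exact hmin j hj⟩
  · rintro ⟨hk, hmin⟩
    exact ⟨hk, fun j hj => by rw [h k hk, h j hj]; exact hmin j hj⟩

lemma vervaat0_congr (h : ∀ i ≤ p, w i = w' i) {k : ℕ} (hk : k ≤ p) :
    vervaat0 p w k = vervaat0 p w' k := by
  have hfm : firstMin p w = firstMin p w' := firstMin_congr h
  have hGp : firstMin p w ≤ p := firstMin_le w p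
  simp only [vervaat0, ← hfm, sInf_img_congr (fun i _ hi => h i hi)]
  by_cases hc : k ≤ p - firstMin p w
  · rw [if_pos hc, if_pos hc, h (k + firstMin p w) (by omega)]
  · rw [if_neg hc, if_neg hc, h (k + firstMin p w - p) (by omega), h p le_rfl, h 0 (by omega)]

end Congr


section Master
open scoped ENNReal

/-- product weight of an increment vector -/
noncomputable def wt (ν : MeasureTheory.Measure ℤ) (p : ℕ) (x : Fin p → ℤ) : ℝ≥0∞ :=
  ∏ i, ν {x i}

variable {ν : MeasureTheory.Measure ℤ} {p : ℕ}

lemma wt_rot {s : ℕ} (hs : s ≤ p) (x : Fin p → ℤ) : wt ν p (rotX p s x) = wt ν p x := by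
  rw [wt, wt]
  have hmod : ∀ a : Fin p, (a.val + s) % p < p := fun a =>
    Nat.mod_lt _ (Nat.lt_of_le_of_lt (Nat.zero_le _) a.isLt)
  have hmod2 : ∀ a : Fin p, (a.val + (p - s)) % p < p := fun a =>
    Nat.mod_lt _ (Nat.lt_of_le_of_lt (Nat.zero_le _) a.isLt)
  refine Finset.prod_bij' (fun a _ => ⟨(a.val + s) % p, hmod a⟩)
    (fun b _ => ⟨(b.val + (p - s)) % p, hmod2 b⟩)
    (fun _ _ => Finset.mem_univ _) (fun _ _ => Finset.mem_univ _) ?_ ?_ ?_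
  · intro a _
    apply Fin.ext
    show ((a.val + s) % p + (p - s)) % p = a.val
    rw [Nat.mod_add_mod, show a.val + s + (p - s) = a.val + p by omega,
      Nat.add_mod_right, Nat.mod_eq_of_lt a.isLt]
  · intro b _
    apply Fin.ext
    show ((b.val + (p - s)) % p + s) % p = b.val
    rw [Nat.mod_add_mod, show b.val + (p - s) + s = b.val + p by omega,
      Nat.add_mod_right, Nat.mod_eq_of_lt b.isLt]
  · intro a _
    rfl

lemma wt_steps (hν : ν {k : ℤ | k < -1} = 0) {x : Fin p → ℤ} (h : wt ν p x ≠ 0) :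
    ∀ i, -1 ≤ x i := by
  intro i
  by_contra hc
  push_neg at hc
  refine h (Finset.prod_eq_zero (Finset.mem_univ i) ?_)
  refine MeasureTheory.measure_mono_null ?_ hν
  intro z hz
  simp only [Set.mem_singleton_iff] at hz
  simp only [Set.mem_setOf_eq, hz]
  omega

/-- The master cycle-lemma identity for weighted counts. -/
lemma master (hp : 1 ≤ p) (hν : ν {k : ℤ | k < -1} = 0) (A B : Set (Fin p → ℤ))
    (hA : ∀ x : Fin p → ℤ, (∀ i, -1 ≤ x i) →
      (x ∈ A ↔ (pw p x p = -1 ∧ rotX p (firstMin p (pw p x)) x ∈ B)))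
    (hB : ∀ y ∈ B, ExcSeq p y) :
    ∑' (x : A), wt ν p x = p * ∑' (y : B), wt ν p y := by
  rw [tsum_subtype A (wt ν p), tsum_subtype B (wt ν p)]
  have hgf : ∑' z : Fin p × (Fin p → ℤ), B.indicator (wt ν p) z.2
      = p * ∑' y, B.indicator (wt ν p) y := by
    rw [show (∑' z : Fin p × (Fin p → ℤ), B.indicator (wt ν p) z.2)
        = ∑' (_ : Fin p), ∑' y, B.indicator (wt ν p) y from ENNReal.tsum_prod (f := fun (_ : Fin p) y => B.indicator (wt ν p) y)]
    rw [tsum_fintype]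
    simp only [Finset.sum_const, Finset.card_univ, Fintype.card_fin, nsmul_eq_mul,
      Nat.cast_id]
  rw [← hgf]
  have hsupp : ∀ z : Fin p × (Fin p → ℤ),
      z ∈ Function.support (fun z : Fin p × (Fin p → ℤ) => B.indicator (wt ν p) z.2)
      → z.2 ∈ B ∧ wt ν p z.2 ≠ 0 := by
    intro z hz
    simp only [Function.mem_support] at hz
    by_cases hb : z.2 ∈ B
    · exact ⟨hb, by rwa [Set.indicator_of_mem hb] at hz⟩
    · rw [Set.indicator_of_notMem hb] at hz
      exact absurd rfl hz
  refine tsum_eq_tsum_of_ne_zero_bij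
    (fun z => rotX p (p - (z.val.1.val + 1)) z.val.2) ?_ ?_ ?_
  · -- injectivity
    rintro ⟨z1, hz1⟩ ⟨z2, hz2⟩ heq
    obtain ⟨hB1, hw1⟩ := hsupp z1 hz1
    obtain ⟨hB2, hw2⟩ := hsupp z2 hz2
    simp only at heq
    have hfm1 : firstMin p (pw p (rotX p (p - (z1.1.val + 1)) z1.2)) = z1.1.val + 1 :=
      back_firstMin (hB _ hB1) (wt_steps hν hw1) (by omega) (by have := z1.1.isLt; omega)
    have hfm2 : firstMin p (pw p (rotX p (p - (z2.1.val + 1)) z2.2)) = z2.1.val + 1 :=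
      back_firstMin (hB _ hB2) (wt_steps hν hw2) (by omega) (by have := z2.1.isLt; omega)
    rw [heq] at hfm1
    have h1 : z1.1 = z2.1 := Fin.ext (by omega)
    have h2 : z1.2 = z2.2 := by
      have e1 : rotX p (z1.1.val + 1) (rotX p (p - (z1.1.val + 1)) z1.2) = z1.2 :=
        rot_rot_eq (by have := z1.1.isLt; omega)
      have e2 : rotX p (z2.1.val + 1) (rotX p (p - (z2.1.val + 1)) z2.2) = z2.2 :=
        rot_rot_eq (by have := z2.1.isLt; omega)
      rw [h1] at heq e1
      rw [← e1, heq, e2]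
    apply Subtype.ext
    exact Prod.ext h1 h2
  · -- support of f contained in range
    intro x hx
    simp only [Function.mem_support, Set.mem_range] at hx ⊢
    have hxA : x ∈ A ∧ wt ν p x ≠ 0 := by
      by_cases hb : x ∈ A
      · exact ⟨hb, by rwa [Set.indicator_of_mem hb] at hx⟩
      · rw [Set.indicator_of_notMem hb] at hx
        exact absurd rfl hx
    obtain ⟨hxA, hxw⟩ := hxA
    obtain ⟨hsum, hrotB⟩ := (hA x (wt_steps hν hxw)).1 hxA
    have hG1 : 1 ≤ firstMin p (pw p x) := firstMin_pos pw_zero hsum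
    have hGp : firstMin p (pw p x) ≤ p := firstMin_le _ p
    have hwty : wt ν p (rotX p (firstMin p (pw p x)) x) = wt ν p x := wt_rot hGp x
    refine ⟨⟨⟨⟨firstMin p (pw p x) - 1, by omega⟩, rotX p (firstMin p (pw p x)) x⟩, ?_⟩, ?_⟩
    · simp only [Function.mem_support]
      rw [Set.indicator_of_mem hrotB, hwty]
      exact hxw
    · show rotX p (p - (firstMin p (pw p x) - 1 + 1)) (rotX p (firstMin p (pw p x)) x) = x
      rw [show firstMin p (pw p x) - 1 + 1 = firstMin p (pw p x) by omega]
      exact rot_rot_eq (by omega)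
  · -- values agree
    rintro ⟨z, hz⟩
    obtain ⟨hzB, hzw⟩ := hsupp z hz
    simp only
    set u := z.1.val + 1 with hu
    have hu1 : 1 ≤ u := by omega
    have hu2 : u ≤ p := by have := z.1.isLt; omega
    set xx := rotX p (p - u) z.2 with hxx
    have hsum : pw p xx p = -1 := by
      rw [hxx, pw_rot_total (by omega)]
      exact (hB _ hzB).2
    have hfm : firstMin p (pw p xx) = u :=
      back_firstMin (hB _ hzB) (wt_steps hν hzw) hu1 hu2
    have hrot : rotX p (firstMin p (pw p xx)) xx = z.2 := by
      rw [hfm, hxx]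
      exact rot_rot_eq (by omega)
    have hsteps : ∀ i, -1 ≤ xx i := by
      intro i
      rw [hxx]
      exact wt_steps hν hzw _
    have hxA : xx ∈ A := (hA xx hsteps).2 ⟨hsum, by rw [hrot]; exact hzB⟩
    have hwt : wt ν p xx = wt ν p z.2 := by
      rw [hxx]
      exact wt_rot (by omega) z.2
    rw [Set.indicator_of_mem hxA, Set.indicator_of_mem hzB, hwt]

end Master


section Meas
open ProbabilityTheory

lemma meas_preimage {Ω : Type*} [MeasurableSpace Ω] (P : Measure Ω)
    (ν : Measure ℤ) (ξ : ℕ → Ω → ℤ) (hmeas : ∀ i, Measurable (ξ i))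
    (hindep : ProbabilityTheory.iIndepFun ξ P)
    (hdist : ∀ i, Measure.map (ξ i) P = ν) (p : ℕ) (S : Set (Fin p → ℤ)) :
    P ((fun ω (i : Fin p) => ξ i.val ω) ⁻¹' S) = ∑' x : S, wt ν p x := by
  classical
  have hsingle : ∀ x : Fin p → ℤ, P {ω | ∀ i : Fin p, ξ i.val ω = x i} = wt ν p x := by
    intro x
    set sets : ℕ → Set ℤ := fun i => if h : i < p then {x ⟨i, h⟩} else Set.univ with hsets
    have hseteq : {ω | ∀ i : Fin p, ξ i.val ω = x i}
        = ⋂ i ∈ Finset.range p, ξ i ⁻¹' sets i := by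
      ext ω
      simp only [Set.mem_setOf_eq, Set.mem_iInter, Finset.mem_range, Set.mem_preimage, hsets]
      constructor
      · intro h i hi
        rw [dif_pos hi]
        exact h ⟨i, hi⟩
      · intro h i
        have h2 := h i.val i.isLt
        rw [dif_pos i.isLt] at h2
        simpa using h2
    have hmeassets : ∀ i ∈ Finset.range p, MeasurableSet (sets i) := by
      intro i _
      by_cases h : i < p
      · rw [hsets]; simp only [dif_pos h]; exact measurableSet_singleton _
      · rw [hsets]; simp only [dif_neg h]; exact MeasurableSet.univ
    rw [hseteq, (ProbabilityTheory.iIndepFun_iff_measure_inter_preimage_eq_mul.1 hindep)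
      (Finset.range p) hmeassets]
    have hterm : ∀ i ∈ Finset.range p,
        P (ξ i ⁻¹' sets i) = (fun i => if h : i < p then ν {x ⟨i, h⟩} else 1) i := by
      intro i hi
      simp only [Finset.mem_range] at hi
      rw [hsets]
      simp only [dif_pos hi]
      rw [← hdist i, Measure.map_apply (hmeas i) (measurableSet_singleton _)]
    rw [Finset.prod_congr rfl hterm, ← Fin.prod_univ_eq_prod_range, wt]
    refine Finset.prod_congr rfl (fun i _ => ?_)
    simp only [dif_pos i.isLt, Fin.eta]
  have hU : (fun ω (i : Fin p) => ξ i.val ω) ⁻¹' S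
      = ⋃ x ∈ S, {ω | ∀ i : Fin p, ξ i.val ω = x i} := by
    ext ω
    simp only [Set.mem_preimage, Set.mem_iUnion]
    constructor
    · intro h
      exact ⟨_, h, fun i => rfl⟩
    · rintro ⟨x, hx, h⟩
      have : (fun i : Fin p => ξ i.val ω) = x := funext (fun i => h i)
      rw [this]
      exact hx
  rw [hU, measure_biUnion (Set.to_countable S) ?_ ?_]
  · exact tsum_congr (fun x => hsingle x)
  · rintro x hx y hy hxy
    refine Set.disjoint_left.2 (fun ω h1 h2 => ?_)
    simp only [Set.mem_setOf_eq] at h1 h2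
    exact hxy (funext (fun i => (h1 i).symm.trans (h2 i)))
  · intro x _
    have : {ω | ∀ i : Fin p, ξ i.val ω = x i} = ⋂ i : Fin p, ξ i.val ⁻¹' {x i} := by
      ext ω
      simp [Set.mem_iInter]
    rw [this]
    exact MeasurableSet.iInter (fun i => (hmeas i.val) (measurableSet_singleton _))

end Meas

/-- the law of the pair `(V_0(W), V_0(H(W) + M))` under
`P(· | W_p = -1)` equals the law of `(W, H(W))` under `P(· | ζ = p)`, all paths
restricted to `{0,…,p}` (stated in cross-multiplied form for every cylinder
event). -/
theorem vervaat_pair_identity {Ω : Type*} [MeasurableSpace Ω] (P : Measure Ω)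
    [IsProbabilityMeasure P]
    (ν : Measure ℤ) [IsProbabilityMeasure ν] (hν : ν {k : ℤ | k < -1} = 0)
    (ξ : ℕ → Ω → ℤ) (hmeas : ∀ i, Measurable (ξ i))
    (hindep : ProbabilityTheory.iIndepFun ξ P)
    (hdist : ∀ i, Measure.map (ξ i) P = ν)
    (W : ℕ → Ω → ℤ) (hW : ∀ n ω, W n ω = ∑ i ∈ Finset.range n, ξ i ω)
    (ζ : Ω → ℕ) (hζ : ∀ ω, ζ ω = sInf {n : ℕ | W n ω = -1})
    (p : ℕ) (hp : 1 ≤ p) (hpos : P {ω | W p ω = -1} ≠ 0) (f g : ℕ → ℤ) :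
    P {ω | W p ω = -1 ∧ ∀ k ≤ p,
        vervaat0 p (fun m => W m ω) k = f k ∧
        vervaat0 p (fun m => (pathHeight (fun i => W i ω) m : ℤ) +
          (pathM (fun i => W i ω) p m : ℤ)) k = g k} *
      P {ω | ζ ω = p}
    = P {ω | ζ ω = p ∧ ∀ k ≤ p,
        W k ω = f k ∧ (pathHeight (fun i => W i ω) k : ℤ) = g k} *
      P {ω | W p ω = -1} := by
  
  classical
  have hζiff : ∀ ω, ζ ω = p ↔ ExcSeq p (fun i : Fin p => ξ i.val ω) := by
    intro ω
    have hagree : ∀ m, m ≤ p → W m ω = pw p (fun i : Fin p => ξ i.val ω) m := by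
      intro m hm
      rw [hW m ω, pw]
      exact Finset.sum_congr rfl (fun i hi => by
        simp only [Finset.mem_range] at hi
        rw [pwX, dif_pos (by omega : i < p)])
    rw [hζ ω]
    constructor
    · intro hs
      have hne : {n : ℕ | W n ω = -1}.Nonempty := by
        by_contra hc
        rw [Set.not_nonempty_iff_eq_empty] at hc
        rw [hc, Nat.sInf_empty] at hs
        omega
      have hpmem : p ∈ {n : ℕ | W n ω = -1} := hs ▸ Nat.sInf_mem hne
      have hlt : ∀ n, n < p → n ∉ {n : ℕ | W n ω = -1} := fun n hn =>
        Nat.notMem_of_lt_sInf (hs ▸ hn)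
      constructor
      · intro n hn hcon
        exact hlt n hn (by rw [Set.mem_setOf_eq, hagree n (le_of_lt hn)]; exact hcon)
      · rw [← hagree p le_rfl]
        exact hpmem
    · rintro ⟨hno, hsum⟩
      refine Nat_sInf_eq ?_ ?_
      · show W p ω = -1
        rw [hagree p le_rfl]
        exact hsum
      · intro j hj hmem
        exact hno j hj (by rw [← hagree j (by omega)]; exact hmem)
  have hbriff : ∀ ω, W p ω = -1 ↔ pw p (fun i : Fin p => ξ i.val ω) p = -1 := by
    intro ω
    have hagree : W p ω = pw p (fun i : Fin p => ξ i.val ω) p := by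
      rw [hW p ω, pw]
      exact Finset.sum_congr rfl (fun i hi => by
        simp only [Finset.mem_range] at hi
        rw [pwX, dif_pos (by omega : i < p)])
    rw [hagree]
  -- the two increment-level events
  set A : Set (Fin p → ℤ) := {x | pw p x p = -1 ∧ ∀ k ≤ p,
      vervaat0 p (pw p x) k = f k ∧ vervaat0 p (hhp (pw p x) p) k = g k} with hA
  set B : Set (Fin p → ℤ) := {y | ExcSeq p y ∧ ∀ k ≤ p,
      pw p y k = f k ∧ (pathHeight (pw p y) k : ℤ) = g k} with hB
  have hE1 : {ω | W p ω = -1 ∧ ∀ k ≤ p,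
        vervaat0 p (fun m => W m ω) k = f k ∧
        vervaat0 p (fun m => (pathHeight (fun i => W i ω) m : ℤ) +
          (pathM (fun i => W i ω) p m : ℤ)) k = g k}
      = (fun ω (i : Fin p) => ξ i.val ω) ⁻¹' A := by
    ext ω
    have hagree : ∀ m, m ≤ p → W m ω = pw p (fun i : Fin p => ξ i.val ω) m := by
      intro m hm
      rw [hW m ω, pw]
      exact Finset.sum_congr rfl (fun i hi => by
        simp only [Finset.mem_range] at hi
        rw [pwX, dif_pos (by omega : i < p)])
    simp only [Set.mem_setOf_eq, Set.mem_preimage, hA]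
    have hv1 : ∀ k, k ≤ p → vervaat0 p (fun m => W m ω) k
        = vervaat0 p (pw p (fun i : Fin p => ξ i.val ω)) k := fun k hk =>
      vervaat0_congr (fun m hm => hagree m hm) hk
    have hv2 : ∀ k, k ≤ p → vervaat0 p (fun m => (pathHeight (fun i => W i ω) m : ℤ) +
          (pathM (fun i => W i ω) p m : ℤ)) k
        = vervaat0 p (hhp (pw p (fun i : Fin p => ξ i.val ω)) p) k := fun k hk =>
      vervaat0_congr (fun m hm => by
        rw [hhp]
        rw [pathHeight_congr (fun i hi => hagree i (hi.trans hm)),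
          pathM_congr (fun i hi => hagree i hi) hm]) hk
    constructor
    · rintro ⟨h1, h2⟩
      refine ⟨(hbriff ω).1 h1, fun k hk => ?_⟩
      obtain ⟨ha, hb⟩ := h2 k hk
      exact ⟨by rw [← hv1 k hk]; exact ha, by rw [← hv2 k hk]; exact hb⟩
    · rintro ⟨h1, h2⟩
      refine ⟨(hbriff ω).2 h1, fun k hk => ?_⟩
      obtain ⟨ha, hb⟩ := h2 k hk
      exact ⟨by rw [hv1 k hk]; exact ha, by rw [hv2 k hk]; exact hb⟩
  have hE2 : {ω | ζ ω = p ∧ ∀ k ≤ p,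
        W k ω = f k ∧ (pathHeight (fun i => W i ω) k : ℤ) = g k}
      = (fun ω (i : Fin p) => ξ i.val ω) ⁻¹' B := by
    ext ω
    have hagree : ∀ m, m ≤ p → W m ω = pw p (fun i : Fin p => ξ i.val ω) m := by
      intro m hm
      rw [hW m ω, pw]
      exact Finset.sum_congr rfl (fun i hi => by
        simp only [Finset.mem_range] at hi
        rw [pwX, dif_pos (by omega : i < p)])
    simp only [Set.mem_setOf_eq, Set.mem_preimage, hB]
    have hv : ∀ k, k ≤ p → (pathHeight (fun i => W i ω) k : ℤ)
        = (pathHeight (pw p (fun i : Fin p => ξ i.val ω)) k : ℤ) := fun k hk => by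
      rw [pathHeight_congr (fun i hi => hagree i (hi.trans hk))]
    constructor
    · rintro ⟨h1, h2⟩
      refine ⟨(hζiff ω).1 h1, fun k hk => ?_⟩
      obtain ⟨ha, hb⟩ := h2 k hk
      exact ⟨by rw [← hagree k hk]; exact ha, by rw [← hv k hk]; exact hb⟩
    · rintro ⟨h1, h2⟩
      refine ⟨(hζiff ω).2 h1, fun k hk => ?_⟩
      obtain ⟨ha, hb⟩ := h2 k hk
      exact ⟨by rw [hagree k hk]; exact ha, by rw [hv k hk]; exact hb⟩
  have hEζ : {ω | ζ ω = p} = (fun ω (i : Fin p) => ξ i.val ω) ⁻¹' {y | ExcSeq p y} := by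
    ext ω
    simp only [Set.mem_setOf_eq, Set.mem_preimage]
    exact hζiff ω
  have hEbr : {ω | W p ω = -1}
      = (fun ω (i : Fin p) => ξ i.val ω) ⁻¹' {x | pw p x p = -1} := by
    ext ω
    simp only [Set.mem_setOf_eq, Set.mem_preimage]
    exact hbriff ω
  -- master applications
  have hmaster1 : ∑' (x : A), wt ν p x = p * ∑' (y : B), wt ν p y := by
    refine master hp hν A B (fun x _ => ?_) (fun y hy => hy.1)
    constructor
    · rintro ⟨hsum, hconds⟩
      refine ⟨hsum, exc_rot hsum, fun k hk => ?_⟩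
      obtain ⟨hf, hg⟩ := hconds k hk
      refine ⟨by rw [← verv_pw hsum hk]; exact hf, ?_⟩
      have e2 : pathHeight (pw p (rotX p (firstMin p (pw p x)) x)) k
          = pathHeight (vervaat0 p (pw p x)) k :=
        pathHeight_congr (fun i hi => (verv_pw hsum (hi.trans hk)).symm)
      rw [e2, ← verv_height pw_zero hsum hk]
      exact hg
    · rintro ⟨hsum, hexc, hconds⟩
      refine ⟨hsum, fun k hk => ?_⟩
      obtain ⟨hf, hg⟩ := hconds k hk
      refine ⟨by rw [verv_pw hsum hk]; exact hf, ?_⟩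
      have e2 : pathHeight (pw p (rotX p (firstMin p (pw p x)) x)) k
          = pathHeight (vervaat0 p (pw p x)) k :=
        pathHeight_congr (fun i hi => (verv_pw hsum (hi.trans hk)).symm)
      rw [verv_height pw_zero hsum hk, ← e2]
      exact hg
  have hmaster2 : ∑' (x : {x : Fin p → ℤ | pw p x p = -1}), wt ν p x
      = p * ∑' (y : {y : Fin p → ℤ | ExcSeq p y}), wt ν p y := by
    refine master hp hν _ _ (fun x _ => ?_) (fun y hy => hy)
    constructor
    · intro hsum
      exact ⟨hsum, exc_rot hsum⟩
    · rintro ⟨hsum, _⟩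
      exact hsum
  rw [hE1, hE2, hEζ, hEbr, meas_preimage P ν ξ hmeas hindep hdist p A,
    meas_preimage P ν ξ hmeas hindep hdist p B,
    meas_preimage P ν ξ hmeas hindep hdist p {y | ExcSeq p y},
    meas_preimage P ν ξ hmeas hindep hdist p {x | pw p x p = -1},
    hmaster1, hmaster2]
  ring
end
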